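/- arXiv:2603.09516 — 9 statements merged into one kernel-verified Lean document; each statement's English description precedes it below -/
import Mathlib

section
/- Let K be a field, V a finite-dimensional K-vector space, E a finite type, (H_i)_{i∈E} a hyperplane arrangement in V, λ_i : V → K linear functionals with ker λ_i = H_i, and λ : V → K^E the induced linear map λ(v) = (λ_i(v))_{i∈E}. Then λ is injective, and for every subset B ⊆ E the following are equivalent: (i) B is a basis of the matroid M_𝒜 of the arrangement (whose rank function is S ↦ dim V − dim ⋂_{i∈S} H_i); (ii) ⋂_{i∈B} H_i = {0} and the cardinality of B equals dim V; (iii) the coordinate projection π_B : K^E → K^B restricts to a linear isomorphism λ(V) ≃ K^B. In particular, M_𝒜 equals the matroid M_{λ(V)} of the subspace λ(V) ⊆ K^E. -/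
open Set Function Module Submodule

/-- The coordinate projection `K^E → K^S` for a subset `S ⊆ E`. -/
def proj (K : Type*) [Semiring K] {E : Type*} (S : Set E) : (E → K) →ₗ[K] (↥S → K) :=
  LinearMap.funLeft K K Subtype.val

/-- The rank function of a matroid: the size of a largest independent subset of `S`. -/
noncomputable def mrk {E : Type*} (M : Matroid E) (S : Set E) : ℕ :=
  sSup (Set.ncard '' {I : Set E | M.Indep I ∧ I ⊆ S})

/-- `M` is the matroid `M_W` of the linear subspace `W ⊆ K^E`: its ground set is all of `E`
and its rank function is `S ↦ dim_K π_S(W)`. -/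
def IsMatroidOf {K E : Type*} [Field K] (M : Matroid E) (W : Submodule K (E → K)) : Prop :=
  M.E = Set.univ ∧ ∀ S : Set E, mrk M S = Module.finrank K ↥(W.map (proj K S))

/-- A hyperplane arrangement in a finite-dimensional `K`-vector space `V` indexed by `E`:
a family of pairwise distinct codimension-one subspaces of `V` with trivial intersection. -/
def IsHyperplaneArrangement {K V E : Type*} [Field K] [AddCommGroup V] [Module K V]
    (H : E → Submodule K V) : Prop :=
  Function.Injective H ∧ (∀ i, Module.finrank K (V ⧸ H i) = 1) ∧ (⨅ i, H i) = ⊥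

section auxMatroid
variable {E : Type*} [Fintype E] {M : Matroid E}

lemma aux_le_mrk {I S : Set E} (hI : M.Indep I) (hIS : I ⊆ S) : I.ncard ≤ mrk M S := by
  refine le_csSup ⟨Fintype.card E, ?_⟩ ⟨I, ⟨hI, hIS⟩, rfl⟩
  rintro n ⟨J, _, rfl⟩
  simpa [Set.ncard_univ, Nat.card_eq_fintype_card] using
    Set.ncard_le_ncard (Set.subset_univ J) Set.finite_univ

lemma aux_mrk_le {S : Set E} {n : ℕ} (h : ∀ I, M.Indep I → I ⊆ S → I.ncard ≤ n) :
    mrk M S ≤ n := by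
  refine csSup_le ⟨0, ∅, ⟨M.empty_indep, Set.empty_subset S⟩, by simp⟩ ?_
  rintro m ⟨J, ⟨hJ, hJS⟩, rfl⟩
  exact h J hJ hJS

lemma aux_mrk_indep {I : Set E} (hI : M.Indep I) : mrk M I = I.ncard :=
  le_antisymm (aux_mrk_le fun J _ hJI => Set.ncard_le_ncard hJI I.toFinite)
    (aux_le_mrk hI subset_rfl)

lemma aux_indep_of_mrk {I : Set E} (h : mrk M I = I.ncard) : M.Indep I := by
  have hmem : sSup (Set.ncard '' {J : Set E | M.Indep J ∧ J ⊆ I}) ∈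
      Set.ncard '' {J : Set E | M.Indep J ∧ J ⊆ I} := by
    refine Nat.sSup_mem ⟨0, ∅, ⟨M.empty_indep, Set.empty_subset I⟩, by simp⟩
      ⟨Fintype.card E, ?_⟩
    rintro n ⟨J, _, rfl⟩
    simpa [Set.ncard_univ, Nat.card_eq_fintype_card] using
      Set.ncard_le_ncard (Set.subset_univ J) Set.finite_univ
  obtain ⟨J, ⟨hJ, hJI⟩, hJc⟩ := hmem
  have hJc' : J.ncard = I.ncard := by rw [hJc]; exact h
  have : J = I := Set.eq_of_subset_of_ncard_le hJI (le_of_eq hJc'.symm) I.toFinite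
  rwa [← this]

lemma aux_mrk_univ {B : Set E} (hB : M.IsBase B) : mrk M Set.univ = B.ncard := by
  refine le_antisymm (aux_mrk_le fun I hI _ => ?_) (aux_le_mrk hB.indep (Set.subset_univ B))
  obtain ⟨B', hB', hIB'⟩ := hI.exists_isBase_superset
  calc I.ncard ≤ B'.ncard := Set.ncard_le_ncard hIB' B'.toFinite
    _ = B.ncard := hB'.ncard_eq_ncard_of_isBase hB

lemma aux_base_iff {B : Set E} :
    M.IsBase B ↔ M.Indep B ∧ B.ncard = mrk M Set.univ := by
  constructor
  · exact fun hB => ⟨hB.indep, (aux_mrk_univ hB).symm⟩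
  · rintro ⟨hind, hcard⟩
    obtain ⟨B', hB', hBB'⟩ := hind.exists_isBase_superset
    have h1 : B'.ncard = B.ncard := by rw [← aux_mrk_univ hB', ← hcard]
    have : B = B' := Set.eq_of_subset_of_ncard_le hBB' (le_of_eq h1) B'.toFinite
    rwa [this]

end auxMatroid

/-- for a hyperplane arrangement with associated embedding `λ = (λ_i) : V → K^E`,
the map `λ` is injective; a subset `B ⊆ E` is a basis of the matroid `M_𝒜` of the arrangement
iff `⋂_{i ∈ B} H i = 0` and `#B = dim V`, iff the coordinate projection `π_B` restricts to an
isomorphism `λ(V) ≃ K^B`; and `M_𝒜` is the matroid of the subspace `λ(V) ⊆ K^E`. -/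
theorem stmt2 {K V E : Type*} [Field K] [AddCommGroup V] [Module K V] [FiniteDimensional K V]
    [Fintype E] (H : E → Submodule K V) (hH : IsHyperplaneArrangement H)
    (l : E → (V →ₗ[K] K)) (hl : ∀ i, LinearMap.ker (l i) = H i)
    (M : Matroid E) (hME : M.E = Set.univ)
    (hMr : ∀ S : Set E,
      mrk M S = Module.finrank K V - Module.finrank K ↥(⨅ i ∈ S, H i)) :
    Function.Injective (LinearMap.pi l) ∧
    (∀ B : Set E,
      (M.IsBase B ↔ (⨅ i ∈ B, H i) = ⊥ ∧ B.ncard = Module.finrank K V) ∧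
      (M.IsBase B ↔ Function.Bijective
        ((proj K B) ∘ₗ (LinearMap.range (LinearMap.pi l)).subtype))) ∧
    IsMatroidOf M (LinearMap.range (LinearMap.pi l)) := by
  obtain ⟨-, -, hinf⟩ := hH
  -- kernel of the composite `π_S ∘ λ`
  have hker : ∀ S : Set E,
      LinearMap.ker ((proj K S).comp (LinearMap.pi l)) = ⨅ i ∈ S, H i := by
    intro S
    have : (proj K S).comp (LinearMap.pi l) = LinearMap.pi (fun i : S => l i) := rfl
    rw [this, LinearMap.ker_pi]
    simp_rw [hl]
    exact iInf_subtype'' S H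
  -- injectivity of λ
  have hinj : Function.Injective (LinearMap.pi l) := by
    rw [← LinearMap.ker_eq_bot, LinearMap.ker_pi]
    simp_rw [hl]; exact hinf
  -- dimension of the projected image
  have hrank : ∀ S : Set E,
      Module.finrank K ↥((LinearMap.range (LinearMap.pi l)).map (proj K S))
        = Module.finrank K V - Module.finrank K ↥(⨅ i ∈ S, H i) := by
    intro S
    rw [← LinearMap.range_comp, ← hker S]
    have := LinearMap.finrank_range_add_finrank_ker ((proj K S).comp (LinearMap.pi l))
    omega
  have hncard : ∀ B : Set E, Module.finrank K (↥B → K) = B.ncard := by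
    intro B
    haveI : Fintype ↥B := B.toFinite.fintype
    rw [Module.finrank_pi, ← Nat.card_coe_set_eq, Nat.card_eq_fintype_card]
  -- rank of the whole matroid
  have hmrk_univ : mrk M Set.univ = Module.finrank K V := by
    have h0 : (⨅ i ∈ (Set.univ : Set E), H i) = ⊥ := by rw [iInf_univ]; exact hinf
    rw [hMr Set.univ, h0, finrank_bot]
    omega
  -- first characterization of bases
  have key : ∀ B : Set E,
      M.IsBase B ↔ (⨅ i ∈ B, H i) = ⊥ ∧ B.ncard = Module.finrank K V := by
    intro B
    rw [aux_base_iff, hmrk_univ]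
    constructor
    · rintro ⟨hind, hcard⟩
      have h1 := aux_mrk_indep hind
      rw [hMr B, hcard] at h1
      have h2 : Module.finrank K ↥(⨅ i ∈ B, H i) ≤ Module.finrank K V :=
        Submodule.finrank_le _
      have h3 : Module.finrank K ↥(⨅ i ∈ B, H i) = 0 := by omega
      exact ⟨Submodule.finrank_eq_zero.mp h3, hcard⟩
    · rintro ⟨hbot, hcard⟩
      refine ⟨aux_indep_of_mrk ?_, hcard⟩
      rw [hMr B, hbot, hcard]
      simp
  -- second characterization : bijectivity
  have key2 : ∀ B : Set E,
      ((⨅ i ∈ B, H i) = ⊥ ∧ B.ncard = Module.finrank K V) ↔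
        Function.Bijective ((proj K B) ∘ₗ (LinearMap.range (LinearMap.pi l)).subtype) := by
    intro B
    set e := LinearEquiv.ofInjective (LinearMap.pi l) hinj with he
    have hc : ⇑((proj K B) ∘ₗ (LinearMap.range (LinearMap.pi l)).subtype) ∘ ⇑e
        = ⇑((proj K B).comp (LinearMap.pi l)) := by
      funext v
      simp [he, proj]
    have hb : Function.Bijective ((proj K B) ∘ₗ (LinearMap.range (LinearMap.pi l)).subtype) ↔
        Function.Bijective ((proj K B).comp (LinearMap.pi l)) := by
      rw [← Function.Bijective.of_comp_iff _ e.bijective, hc]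
    rw [hb]
    constructor
    · rintro ⟨hbot, hcard⟩
      have hinj' : Function.Injective ((proj K B).comp (LinearMap.pi l)) := by
        rw [← LinearMap.ker_eq_bot, hker B, hbot]
      refine ⟨hinj', ?_⟩
      rw [← LinearMap.injective_iff_surjective_of_finrank_eq_finrank (by rw [hncard B, hcard])]
      exact hinj'
    · intro hbij
      have hbot : (⨅ i ∈ B, H i) = ⊥ := by
        rw [← hker B, LinearMap.ker_eq_bot]
        exact hbij.injective
      refine ⟨hbot, ?_⟩
      have := (LinearEquiv.ofBijective _ hbij).finrank_eq
      rw [hncard B] at this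
      omega
  refine ⟨hinj, fun B => ⟨key B, (key B).trans (key2 B)⟩, hME, fun S => by rw [hMr S, hrank S]⟩
end

section
/- Let K be a field, E a finite type, and M a matroid of rank r on E with hyperplane set 𝓗. Suppose η assigns to each hyperplane H ∈ 𝓗 a vector η_H ∈ K^E with supp(η_H) = E ∖ H, such that for every triple of pairwise distinct hyperplanes H₁, H₂, H₃ ∈ 𝓗 whose intersection H₁ ∩ H₂ ∩ H₃ has corank 2 in M, the vectors η_{H₁}, η_{H₂}, η_{H₃} are K-linearly dependent. Then the subspace W = span{η_H : H ∈ 𝓗} ⊆ K^E satisfies M_W = M; in particular dim_K W = r and rank_M(S) = dim_K π_S(W) for every S ⊆ E. -/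
open Set Function Module Submodule

/-- A hyperplane of a matroid: a flat of rank one less than the rank of the matroid. -/
def IsHyperplaneOf {E : Type*} (M : Matroid E) (H : Set E) : Prop :=
  M.IsFlat H ∧ mrk M H + 1 = mrk M M.E

set_option maxHeartbeats 1000000
set_option synthInstance.maxHeartbeats 200000

namespace Stmt6

variable {E : Type*} [Fintype E] {M : Matroid E} {S T I J B F H : Set E} {e x y : E}

lemma subset_ground (hME : M.E = Set.univ) (S : Set E) : S ⊆ M.E := by
  rw [hME]; exact subset_univ _

lemma ncard_le_mrk (hJ : M.Indep J) (hJS : J ⊆ S) : J.ncard ≤ mrk M S := by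
  refine le_csSup ⟨Fintype.card E, ?_⟩ ⟨J, ⟨hJ, hJS⟩, rfl⟩
  rintro n ⟨I, -, rfl⟩
  have := Set.ncard_le_ncard (subset_univ I) (Set.toFinite _)
  simpa [Set.ncard_univ, Nat.card_eq_fintype_card] using this

lemma mrk_le (n : ℕ) (h : ∀ J, M.Indep J → J ⊆ S → J.ncard ≤ n) : mrk M S ≤ n := by
  have hne : (Set.ncard '' {I : Set E | M.Indep I ∧ I ⊆ S}).Nonempty :=
    ⟨0, ∅, ⟨M.empty_indep, empty_subset _⟩, by simp⟩
  show sSup (Set.ncard '' {I : Set E | M.Indep I ∧ I ⊆ S}) ≤ n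
  refine csSup_le hne ?_
  rintro m ⟨I, ⟨hI, hIS⟩, rfl⟩
  exact h I hI hIS

lemma Basis_mrk (hI : M.IsBasis I S) : mrk M S = I.ncard := by
  refine le_antisymm (mrk_le _ fun J hJ hJS => ?_) (ncard_le_mrk hI.indep hI.subset)
  obtain ⟨J', hJ', hJJ'⟩ := hJ.subset_isBasis_of_subset hJS hI.subset_ground
  calc J.ncard ≤ J'.ncard := Set.ncard_le_ncard hJJ' (Set.toFinite _)
    _ = I.ncard := hJ'.restrict_isBase.ncard_eq_ncard_of_isBase hI.restrict_isBase

lemma mrk_mono (hME : M.E = Set.univ) (hST : S ⊆ T) : mrk M S ≤ mrk M T :=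
  mrk_le _ fun J hJ hJS => ncard_le_mrk hJ (hJS.trans hST)

lemma mrk_closure (hME : M.E = Set.univ) (S : Set E) : mrk M (M.closure S) = mrk M S := by
  obtain ⟨I, hI⟩ := M.exists_isBasis S (subset_ground hME S)
  rw [Basis_mrk hI.isBasis_closure_right, Basis_mrk hI]

lemma mrk_insert_of_not_mem_closure (hME : M.E = Set.univ) (he : e ∉ M.closure S) :
    mrk M (insert e S) = mrk M S + 1 := by
  obtain ⟨I, hI⟩ := M.exists_isBasis S (subset_ground hME S)
  have heI : e ∉ M.closure I := by rwa [hI.closure_eq_closure]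
  have hind : M.Indep (insert e I) := by
    rw [hI.indep.insert_indep_iff_of_notMem (fun h => heI (M.subset_closure I hI.indep.subset_ground h))]
    exact ⟨by rw [hME]; exact mem_univ e, heI⟩
  rw [Basis_mrk (hI.insert_isBasis_insert hind), Basis_mrk hI,
    Set.ncard_insert_of_notMem (fun h => heI (M.subset_closure I hI.indep.subset_ground h)) (Set.toFinite _)]

lemma Base_mrk (hME : M.E = Set.univ) (hB : M.IsBase B) : mrk M Set.univ = B.ncard := by
  have : M.IsBasis B Set.univ := by
    rw [← hME]; exact hB.isBasis_ground
  exact Basis_mrk this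

lemma closure_eq_univ_of_mrk (hME : M.E = Set.univ) (hS : mrk M Set.univ ≤ mrk M S) :
    M.closure S = Set.univ := by
  obtain ⟨I, hI⟩ := M.exists_isBasis S (subset_ground hME S)
  obtain ⟨B, hB, hIB⟩ := hI.indep.exists_isBase_superset
  have hcard : B.ncard ≤ I.ncard := by
    rw [← Basis_mrk hI, ← Base_mrk hME hB]; exact hS
  have hIB' : I = B := Set.eq_of_subset_of_ncard_le hIB hcard (Set.toFinite _)
  have hc : M.closure B ⊆ M.closure S := M.closure_subset_closure (hIB' ▸ hI.subset)
  rw [hB.closure_eq, hME] at hc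
  exact subset_antisymm (by rw [← hME]; exact M.closure_subset_ground S) hc

lemma flat_eq_of_subset (hME : M.E = Set.univ) (hF : M.IsFlat F) (hH : M.IsFlat H) (hFH : F ⊆ H)
    (hrk : mrk M H ≤ mrk M F) : F = H := by
  obtain ⟨I, hI⟩ := M.exists_isBasis F (subset_ground hME F)
  obtain ⟨J, hJ, hIJ⟩ := hI.indep.subset_isBasis_of_subset (hI.subset.trans hFH) (subset_ground hME H)
  have : I = J := Set.eq_of_subset_of_ncard_le hIJ
    (by rw [← Basis_mrk hI, ← Basis_mrk hJ]; exact hrk) (Set.toFinite _)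
  refine subset_antisymm hFH ?_
  have h1 : H ⊆ M.closure I := this ▸ hJ.subset_closure
  have h2 : M.closure I ⊆ M.closure F := M.closure_subset_closure hI.subset
  rw [hF.closure] at h2
  exact h1.trans h2


lemma flat_closure (M : Matroid E) (X : Set E) : M.IsFlat (M.closure X) := by
  rw [Matroid.closure_def, sInter_eq_iInter]
  haveI : Nonempty ↑{F | M.IsFlat F ∧ X ∩ M.E ⊆ F} := ⟨⟨M.E, M.ground_isFlat, inter_subset_right⟩⟩
  exact Matroid.IsFlat.iInter fun F => F.2.1

lemma flat_inter (h₁ : M.IsFlat S) (h₂ : M.IsFlat T) : M.IsFlat (S ∩ T) := by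
  rw [Set.inter_eq_iInter]
  exact Matroid.IsFlat.iInter (by rintro (_|_) <;> simpa)

lemma hyp_rk (hME : M.E = Set.univ) (h : IsHyperplaneOf M H) :
    mrk M H + 1 = mrk M Set.univ := by rw [← hME]; exact h.2

lemma hyp_closure_indep (hME : M.E = Set.univ) (hI : M.Indep I)
    (hcard : I.ncard + 1 = mrk M Set.univ) : IsHyperplaneOf M (M.closure I) :=
  ⟨flat_closure M I, by rw [hME, mrk_closure hME, Basis_mrk hI.isBasis_self, hcard]⟩

lemma hyp_not_subset (hME : M.E = Set.univ) (h₁ : IsHyperplaneOf M S) (h₂ : IsHyperplaneOf M T)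
    (hne : S ≠ T) : ¬ S ⊆ T := by
  intro hss
  refine hne (flat_eq_of_subset hME h₁.1 h₂.1 hss ?_)
  have e1 := hyp_rk hME h₁; have e2 := hyp_rk hME h₂; omega

lemma hyp_exists_mem (hME : M.E = Set.univ) (h₁ : IsHyperplaneOf M S) (h₂ : IsHyperplaneOf M T)
    (hne : S ≠ T) : ∃ a, a ∈ S ∧ a ∉ T := by
  have := hyp_not_subset hME h₁ h₂ hne
  rwa [Set.not_subset] at this

lemma mrk_inter_hyp (hME : M.E = Set.univ) (h₁ : IsHyperplaneOf M S) (h₂ : IsHyperplaneOf M T)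
    (hne : S ≠ T) : mrk M (S ∩ T) + 2 ≤ mrk M Set.univ := by
  have e1 := hyp_rk hME h₁; have e2 := hyp_rk hME h₂
  have hub : mrk M (S ∩ T) ≤ mrk M S := mrk_mono hME inter_subset_left
  rcases Nat.lt_or_ge (mrk M (S ∩ T)) (mrk M S) with h | h
  · omega
  · exfalso
    have heq : S ∩ T = S := flat_eq_of_subset hME (flat_inter h₁.1 h₂.1) h₁.1 inter_subset_left h
    have hsub : S ⊆ T := by rw [← heq]; exact inter_subset_right
    exact hyp_not_subset hME h₁ h₂ hne hsub

section Eta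

variable {K : Type*} [Field K] {η : Set E → (E → K)}

lemma eta_eq_zero_iff (hsupp : ∀ H, IsHyperplaneOf M H → Function.support (η H) = Set.univ \ H)
    (h : IsHyperplaneOf M H) (e : E) : η H e = 0 ↔ e ∈ H := by
  constructor
  · intro h0
    by_contra he
    have : e ∈ Function.support (η H) := by rw [hsupp H h]; exact ⟨mem_univ e, he⟩
    exact this h0
  · intro he
    by_contra h0
    have : e ∈ Set.univ \ H := by rw [← hsupp H h]; exact h0
    exact this.2 he

lemma pair_coeff_zero (hME : M.E = Set.univ)
    (hsupp : ∀ H, IsHyperplaneOf M H → Function.support (η H) = Set.univ \ H)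
    {H₁ H₂ : Set E} (h₁ : IsHyperplaneOf M H₁) (h₂ : IsHyperplaneOf M H₂) (hne : H₁ ≠ H₂)
    {c₁ c₂ : K} (hc : c₁ • η H₁ + c₂ • η H₂ = 0) : c₁ = 0 ∧ c₂ = 0 := by
  obtain ⟨a, haH₂, haH₁⟩ := hyp_exists_mem hME h₂ h₁ hne.symm
  obtain ⟨b, hbH₁, hbH₂⟩ := hyp_exists_mem hME h₁ h₂ hne
  have ha := congrFun hc a
  have hb := congrFun hc b
  simp only [Pi.add_apply, Pi.smul_apply, Pi.zero_apply, smul_eq_mul] at ha hb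
  rw [(eta_eq_zero_iff hsupp h₂ a).2 haH₂] at ha
  rw [(eta_eq_zero_iff hsupp h₁ b).2 hbH₁] at hb
  have ha1 : η H₁ a ≠ 0 := fun h0 => haH₁ ((eta_eq_zero_iff hsupp h₁ a).1 h0)
  have hb2 : η H₂ b ≠ 0 := fun h0 => hbH₂ ((eta_eq_zero_iff hsupp h₂ b).1 h0)
  constructor
  · rw [mul_zero, add_zero] at ha
    exact (mul_eq_zero.1 ha).resolve_right ha1
  · rw [mul_zero, zero_add] at hb
    exact (mul_eq_zero.1 hb).resolve_right hb2

lemma triple_span (hME : M.E = Set.univ)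
    (hsupp : ∀ H, IsHyperplaneOf M H → Function.support (η H) = Set.univ \ H)
    (hdep : ∀ H₁ H₂ H₃ : Set E, IsHyperplaneOf M H₁ → IsHyperplaneOf M H₂ →
      IsHyperplaneOf M H₃ → H₁ ≠ H₂ → H₁ ≠ H₃ → H₂ ≠ H₃ →
      mrk M (H₁ ∩ H₂ ∩ H₃) + 2 = mrk M Set.univ →
      ¬ LinearIndependent K ![η H₁, η H₂, η H₃])
    {H₁ H₂ H₃ : Set E} (h₁ : IsHyperplaneOf M H₁) (h₂ : IsHyperplaneOf M H₂)
    (h₃ : IsHyperplaneOf M H₃) (h12 : H₁ ≠ H₂) (h13 : H₁ ≠ H₃) (h23 : H₂ ≠ H₃)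
    (hmod : mrk M (H₁ ∩ H₂ ∩ H₃) + 2 = mrk M Set.univ) :
    η H₁ ∈ Submodule.span K {η H₂, η H₃} := by
  have hnli := hdep H₁ H₂ H₃ h₁ h₂ h₃ h12 h13 h23 hmod
  rw [Fintype.not_linearIndependent_iff] at hnli
  obtain ⟨g, hg, i, hi⟩ := hnli
  rw [Fin.sum_univ_three] at hg
  simp only [Matrix.cons_val_zero, Matrix.cons_val_one, Matrix.head_cons,
    Matrix.cons_val_two, Matrix.tail_cons] at hg
  have hg0 : g 0 ≠ 0 := by
    intro h0
    rw [h0, zero_smul, zero_add] at hg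
    obtain ⟨e1, e2⟩ := pair_coeff_zero hME hsupp h₂ h₃ h23 hg
    fin_cases i <;> simp_all
  rw [Submodule.mem_span_pair]
  refine ⟨-(g 0)⁻¹ * g 1, -(g 0)⁻¹ * g 2, ?_⟩
  funext a
  have h := congrFun hg a
  have hinv : (g 0)⁻¹ * g 0 = 1 := inv_mul_cancel₀ hg0
  simp only [Pi.add_apply, Pi.smul_apply, Pi.zero_apply, smul_eq_mul] at h ⊢
  linear_combination (-(g 0)⁻¹) * h + (η H₁ a) * hinv

lemma Qprime (hME : M.E = Set.univ)
    (hsupp : ∀ H, IsHyperplaneOf M H → Function.support (η H) = Set.univ \ H)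
    (hdep : ∀ H₁ H₂ H₃ : Set E, IsHyperplaneOf M H₁ → IsHyperplaneOf M H₂ →
      IsHyperplaneOf M H₃ → H₁ ≠ H₂ → H₁ ≠ H₃ → H₂ ≠ H₃ →
      mrk M (H₁ ∩ H₂ ∩ H₃) + 2 = mrk M Set.univ →
      ¬ LinearIndependent K ![η H₁, η H₂, η H₃])
    (F : Set E) (e : E) :
    ∀ d : ℕ, ∀ H₁ H₂ : Set E, IsHyperplaneOf M H₁ → IsHyperplaneOf M H₂ → H₁ ≠ H₂ →
      F ⊆ H₁ → F ⊆ H₂ → e ∉ H₁ → e ∉ H₂ →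
      mrk M Set.univ = mrk M (H₁ ∩ H₂) + 2 + d →
      η H₂ ∈ Submodule.span K
        (insert (η H₁) (η '' {H | IsHyperplaneOf M H ∧ F ⊆ H ∧ e ∈ H})) := by
  intro d
  induction d using Nat.strong_induction_on with
  | _ d IH =>
  intro H₁ H₂ hH₁ hH₂ hne hFH₁ hFH₂ heH₁ heH₂ hd
  set r := mrk M Set.univ with hr
  set L := H₁ ∩ H₂ with hL
  have hLflat : M.IsFlat L := flat_inter hH₁.1 hH₂.1
  have hFL : F ⊆ L := subset_inter hFH₁ hFH₂
  -- basis of L, extended to a basis of H₂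
  obtain ⟨I, hI⟩ := M.exists_isBasis L (subset_ground hME L)
  have hIcard : I.ncard = mrk M L := (Basis_mrk hI).symm
  obtain ⟨J, hJ, hIJ⟩ := hI.indep.subset_isBasis_of_subset
    (hI.subset.trans inter_subset_right) (subset_ground hME H₂)
  have hJcard : J.ncard + 1 = r := by
    have h2 := hyp_rk hME hH₂
    rw [Basis_mrk hJ] at h2
    omega
  -- pick y ∈ J \ I
  have hJI : (J \ I).Nonempty := by
    rw [Set.nonempty_iff_ne_empty]
    intro hcon
    have : J ⊆ I := by rw [Set.diff_eq_empty] at hcon; exact hcon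
    have := Set.ncard_le_ncard this (Set.toFinite _)
    omega
  obtain ⟨y, hyJ, hyI⟩ := hJI
  set J' := J \ {y} with hJ'
  have hJ'indep : M.Indep J' := hJ.indep.diff {y}
  have hJ'card : J'.ncard + 1 = J.ncard := by
    rw [hJ']
    rw [Set.ncard_diff_singleton_add_one hyJ (Set.toFinite _)]
  have hIJ' : I ⊆ J' := fun i hi => ⟨hIJ hi, fun h => hyI (h ▸ hi)⟩
  set L' := M.closure J' with hL'
  have hJ'L' : J' ⊆ L' := M.subset_closure J' (subset_ground hME J')
  have hJ'H₂ : J' ⊆ H₂ := Set.diff_subset.trans hJ.subset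
  have hL'H₂ : L' ⊆ H₂ := by
    rw [hL']
    calc M.closure J' ⊆ M.closure H₂ := M.closure_subset_closure hJ'H₂
      _ = H₂ := hH₂.1.closure
  have hLL' : L ⊆ L' := hI.subset_closure.trans (M.closure_subset_closure hIJ')
  have heL' : e ∉ L' := fun h => heH₂ (hL'H₂ h)
  have hmrkL' : mrk M L' = J'.ncard := by
    rw [hL', mrk_closure hME, Basis_mrk hJ'indep.isBasis_self]
  -- H₃
  have heJ' : e ∉ J' := fun h => heL' (hJ'L' h)
  have heclJ' : e ∉ M.closure J' := heL'
  have hins_e : M.Indep (insert e J') := by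
    rw [hJ'indep.insert_indep_iff_of_notMem heJ']
    exact ⟨by rw [hME]; exact mem_univ e, heclJ'⟩
  set H₃ := M.closure (insert e J') with hH₃def
  have hH₃ : IsHyperplaneOf M H₃ := by
    refine hyp_closure_indep hME hins_e ?_
    rw [Set.ncard_insert_of_notMem heJ' (Set.toFinite _)]; omega
  have heH₃ : e ∈ H₃ := M.subset_closure _ (subset_ground hME _) (mem_insert e J')
  have hL'H₃ : L' ⊆ L' := le_refl _
  have hL'subH₃ : L' ⊆ H₃ := by
    rw [hL', hH₃def]
    exact M.closure_subset_closure (subset_insert e J')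
  have hFH₃ : F ⊆ H₃ := (hFL.trans hLL').trans hL'subH₃
  have hH₃H₂ : H₃ ≠ H₂ := fun h => heH₂ (h ▸ heH₃)
  -- pick x ∈ H₁ \ H₃
  have hH₁H₃ : H₁ ≠ H₃ := fun h => heH₁ (h ▸ heH₃)
  obtain ⟨x, hxH₁, hxH₃⟩ := hyp_exists_mem hME hH₁ hH₃ hH₁H₃
  have hLsubH₃ : L ⊆ H₃ := hLL'.trans hL'subH₃
  have hxL : x ∉ L := fun h => hxH₃ (hLsubH₃ h)
  have hxH₂ : x ∉ H₂ := fun h => hxL ⟨hxH₁, h⟩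
  have hxL' : x ∉ L' := fun h => hxH₃ (hL'subH₃ h)
  have hxJ' : x ∉ J' := fun h => hxL' (hJ'L' h)
  -- Hx
  have hins_x : M.Indep (insert x J') := by
    rw [hJ'indep.insert_indep_iff_of_notMem hxJ']
    exact ⟨by rw [hME]; exact mem_univ x, hxL'⟩
  set Hx := M.closure (insert x J') with hHxdef
  have hHx : IsHyperplaneOf M Hx := by
    refine hyp_closure_indep hME hins_x ?_
    rw [Set.ncard_insert_of_notMem hxJ' (Set.toFinite _)]; omega
  have hxHx : x ∈ Hx := M.subset_closure _ (subset_ground hME _) (mem_insert x J')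
  have hL'subHx : L' ⊆ Hx := by
    rw [hL', hHxdef]
    exact M.closure_subset_closure (subset_insert x J')
  have hFHx : F ⊆ Hx := (hFL.trans hLL').trans hL'subHx
  have hHxH₂ : Hx ≠ H₂ := fun h => hxH₂ (h ▸ hxHx)
  have hHxH₃ : Hx ≠ H₃ := fun h => hxH₃ (h ▸ hxHx)
  have heHx : e ∉ Hx := by
    intro h
    apply hHxH₃
    have hsub : H₃ ⊆ Hx := by
      rw [hH₃def]
      have : insert e J' ⊆ Hx := insert_subset h (hJ'L'.trans hL'subHx)
      calc M.closure (insert e J') ⊆ M.closure Hx := M.closure_subset_closure this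
        _ = Hx := hHx.1.closure
    have e3 := hyp_rk hME hH₃; have ex := hyp_rk hME hHx
    exact (flat_eq_of_subset hME hH₃.1 hHx.1 hsub (by omega)).symm
  -- modular triple (H₂, Hx, H₃)
  have hmod : mrk M (H₂ ∩ Hx ∩ H₃) + 2 = r := by
    have hub := mrk_inter_hyp hME hH₂ hHx hHxH₂.symm
    have h1 : mrk M (H₂ ∩ Hx ∩ H₃) ≤ mrk M (H₂ ∩ Hx) :=
      mrk_mono hME inter_subset_left
    have h2 : L' ⊆ H₂ ∩ Hx ∩ H₃ :=
      subset_inter (subset_inter hL'H₂ hL'subHx) hL'subH₃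
    have h3 := mrk_mono hME h2
    rw [hmrkL'] at h3
    omega
  have htriple : η H₂ ∈ Submodule.span K {η Hx, η H₃} :=
    triple_span hME hsupp hdep hH₂ hHx hH₃ hHxH₂.symm hH₃H₂.symm hHxH₃ (by rw [← hr]; exact hmod)
  -- combine
  set T : Set (E → K) := η '' {H | IsHyperplaneOf M H ∧ F ⊆ H ∧ e ∈ H} with hT
  have hH₃T : η H₃ ∈ T := ⟨H₃, ⟨hH₃, hFH₃, heH₃⟩, rfl⟩
  by_cases hHxH₁ : Hx = H₁
  · have hsub : ({η Hx, η H₃} : Set (E → K)) ⊆ insert (η H₁) T := by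
      rintro v (rfl | rfl)
      · rw [hHxH₁]; exact mem_insert _ _
      · exact mem_insert_of_mem _ hH₃T
    exact Submodule.span_mono hsub htriple
  · -- induction step
    have hxclL : x ∉ M.closure L := by rw [hLflat.closure]; exact hxL
    have hmrkxL : mrk M (insert x L) = mrk M L + 1 := mrk_insert_of_not_mem_closure hME hxclL
    have hsubxL : insert x L ⊆ H₁ ∩ Hx :=
      insert_subset ⟨hxH₁, hxHx⟩ (subset_inter inter_subset_left (hLL'.trans hL'subHx))
    have hge : mrk M L + 1 ≤ mrk M (H₁ ∩ Hx) := by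
      have := mrk_mono hME hsubxL; omega
    have hub := mrk_inter_hyp hME hH₁ hHx (Ne.symm hHxH₁)
    set d' := r - 2 - mrk M (H₁ ∩ Hx) with hd'
    have hd'eq : r = mrk M (H₁ ∩ Hx) + 2 + d' := by omega
    have hd'lt : d' < d := by omega
    have ihx := IH d' hd'lt H₁ Hx hH₁ hHx (Ne.symm hHxH₁) hFH₁ hFHx heH₁ heHx hd'eq
    have hsub : ({η Hx, η H₃} : Set (E → K)) ⊆
        (Submodule.span K (insert (η H₁) T) : Set (E → K)) := by
      rintro v (rfl | rfl)
      · exact ihx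
      · exact Submodule.subset_span (mem_insert_of_mem _ hH₃T)
    have := Submodule.span_le.mpr hsub
    exact this htriple

lemma span_vanish {e : E}
    (hsupp : ∀ H, IsHyperplaneOf M H → Function.support (η H) = Set.univ \ H)
    {S : Set (Set E)} (hS : ∀ H ∈ S, IsHyperplaneOf M H ∧ e ∈ H) {z : E → K}
    (hz : z ∈ Submodule.span K (η '' S)) : z e = 0 := by
  induction hz using Submodule.span_induction with
  | mem u hu =>
    obtain ⟨H, hH, rfl⟩ := hu
    exact (eta_eq_zero_iff hsupp (hS H hH).1 e).2 (hS H hH).2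
  | zero => rfl
  | add u v _ _ hu hv => simp [hu, hv]
  | smul c u _ hu => simp [hu]

lemma core (hME : M.E = Set.univ)
    (hsupp : ∀ H, IsHyperplaneOf M H → Function.support (η H) = Set.univ \ H)
    (hdep : ∀ H₁ H₂ H₃ : Set E, IsHyperplaneOf M H₁ → IsHyperplaneOf M H₂ →
      IsHyperplaneOf M H₃ → H₁ ≠ H₂ → H₁ ≠ H₃ → H₂ ≠ H₃ →
      mrk M (H₁ ∩ H₂ ∩ H₃) + 2 = mrk M Set.univ →
      ¬ LinearIndependent K ![η H₁, η H₂, η H₃])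
    (F : Set E) (e : E) {w : E → K}
    (hw : w ∈ Submodule.span K (η '' {H | IsHyperplaneOf M H ∧ F ⊆ H}))
    (hwe : w e = 0) :
    w ∈ Submodule.span K (η '' {H | IsHyperplaneOf M H ∧ insert e F ⊆ H}) := by
  have hseteq : {H | IsHyperplaneOf M H ∧ insert e F ⊆ H}
      = {H | IsHyperplaneOf M H ∧ F ⊆ H ∧ e ∈ H} := by
    ext H; simp only [mem_setOf_eq, insert_subset_iff]; tauto
  rw [hseteq]
  set T : Set (E → K) := η '' {H | IsHyperplaneOf M H ∧ F ⊆ H ∧ e ∈ H} with hT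
  by_cases hex : ∃ H₁, IsHyperplaneOf M H₁ ∧ F ⊆ H₁ ∧ e ∉ H₁
  · obtain ⟨H₁, hH₁, hFH₁, heH₁⟩ := hex
    have hstep : Submodule.span K (η '' {H | IsHyperplaneOf M H ∧ F ⊆ H})
        ≤ Submodule.span K (insert (η H₁) T) := by
      rw [Submodule.span_le]
      rintro v ⟨H, ⟨hH, hFH⟩, rfl⟩
      by_cases heH : e ∈ H
      · exact Submodule.subset_span (mem_insert_of_mem _ ⟨H, ⟨hH, hFH, heH⟩, rfl⟩)
      by_cases hHH₁ : H = H₁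
      · exact Submodule.subset_span (hHH₁ ▸ mem_insert _ _)
      · have hub := mrk_inter_hyp hME hH₁ hH (fun h => hHH₁ h.symm)
        exact Qprime hME hsupp hdep F e (mrk M Set.univ - 2 - mrk M (H₁ ∩ H)) H₁ H
          hH₁ hH (fun h => hHH₁ h.symm) hFH₁ hFH heH₁ heH (by omega)
    have hw' := hstep hw
    rw [Submodule.span_insert] at hw'
    obtain ⟨y, hy, z, hz, rfl⟩ := Submodule.mem_sup.1 hw'
    obtain ⟨t, rfl⟩ := Submodule.mem_span_singleton.1 hy
    have hze : z e = 0 := span_vanish hsupp (fun H hH => ⟨hH.1, hH.2.2⟩) hz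
    have hη : η H₁ e ≠ 0 := fun h0 => heH₁ ((eta_eq_zero_iff hsupp hH₁ e).1 h0)
    have ht : t = 0 := by
      have : t * η H₁ e + z e = 0 := hwe
      rw [hze, add_zero] at this
      exact (mul_eq_zero.1 this).resolve_right hη
    rw [ht, zero_smul, zero_add]
    exact hz
  · push_neg at hex
    refine Submodule.span_mono ?_ hw
    rintro v ⟨H, ⟨hH, hFH⟩, rfl⟩
    exact ⟨H, ⟨hH, hFH, hex H hH hFH⟩, rfl⟩

lemma vanish_mem_span (hME : M.E = Set.univ)
    (hsupp : ∀ H, IsHyperplaneOf M H → Function.support (η H) = Set.univ \ H)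
    (hdep : ∀ H₁ H₂ H₃ : Set E, IsHyperplaneOf M H₁ → IsHyperplaneOf M H₂ →
      IsHyperplaneOf M H₃ → H₁ ≠ H₂ → H₁ ≠ H₃ → H₂ ≠ H₃ →
      mrk M (H₁ ∩ H₂ ∩ H₃) + 2 = mrk M Set.univ →
      ¬ LinearIndependent K ![η H₁, η H₂, η H₃])
    {w : E → K} (hw : w ∈ Submodule.span K (η '' {H | IsHyperplaneOf M H}))
    (G : Finset E) (hvan : ∀ b ∈ G, w b = 0) :
    w ∈ Submodule.span K (η '' {H | IsHyperplaneOf M H ∧ ↑G ⊆ H}) := by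
  classical
  induction G using Finset.induction_on with
  | empty =>
    refine Submodule.span_mono ?_ hw
    rintro v ⟨H, hH, rfl⟩
    exact ⟨H, ⟨hH, by simp⟩, rfl⟩
  | insert a G' hnotmem ih =>
    have h1 := ih (fun b hb => hvan b (Finset.mem_insert_of_mem hb))
    have h2 := core hME hsupp hdep (↑G') a h1 (hvan a (Finset.mem_insert_self a G'))
    refine Submodule.span_mono ?_ h2
    rintro v ⟨H, ⟨hH, hsub⟩, rfl⟩
    exact ⟨H, ⟨hH, by rwa [Finset.coe_insert]⟩, rfl⟩

lemma diag_hyp (hME : M.E = Set.univ) (hB : M.IsBase B) {i : E} (hi : i ∈ B) :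
    IsHyperplaneOf M (M.closure (B \ {i})) := by
  refine hyp_closure_indep hME (hB.indep.diff {i}) ?_
  rw [Set.ncard_diff_singleton_add_one hi (Set.toFinite _)]
  exact (Base_mrk hME hB).symm

lemma diag_li (hME : M.E = Set.univ)
    (hsupp : ∀ H, IsHyperplaneOf M H → Function.support (η H) = Set.univ \ H)
    (hB : M.IsBase B) {P S : Set E} (hPB : P ⊆ B) (hPS : P ⊆ S) :
    LinearIndependent K (fun i : ↥P => proj K S (η (M.closure (B \ {(i : E)})))) := by
  haveI : Fintype ↥P := Fintype.ofFinite _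
  rw [Fintype.linearIndependent_iff]
  intro g hg j
  have hj := congrFun hg ⟨(j : E), hPS j.2⟩
  simp only [Finset.sum_apply, Pi.smul_apply, smul_eq_mul, Pi.zero_apply, proj,
    LinearMap.funLeft_apply] at hj
  rw [Finset.sum_eq_single j] at hj
  · have hne : η (M.closure (B \ {(j : E)})) (j : E) ≠ 0 := by
      intro h0
      exact hB.indep.notMem_closure_diff_of_mem (hPB j.2)
        ((eta_eq_zero_iff hsupp (diag_hyp hME hB (hPB j.2)) _).1 h0)
    exact (mul_eq_zero.1 hj).resolve_right hne
  · intro i _ hij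
    have hjmem : (j : E) ∈ M.closure (B \ {(i : E)}) := by
      refine M.subset_closure _ (subset_ground hME _) ⟨hPB j.2, ?_⟩
      intro h
      exact hij (Subtype.ext (Set.mem_singleton_iff.1 h)).symm
    rw [(eta_eq_zero_iff hsupp (diag_hyp hME hB (hPB i.2)) _).2 hjmem, mul_zero]
  · intro h; exact absurd (Finset.mem_univ j) h

lemma lower_bound (hME : M.E = Set.univ)
    (hsupp : ∀ H, IsHyperplaneOf M H → Function.support (η H) = Set.univ \ H)
    (S : Set E) :
    mrk M S ≤ finrank K
      ↥((Submodule.span K (η '' {H | IsHyperplaneOf M H})).map (proj K S)) := by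
  obtain ⟨I, hI⟩ := M.exists_isBasis S (subset_ground hME S)
  obtain ⟨B, hB, hIB⟩ := hI.indep.exists_isBase_superset
  set W := Submodule.span K (η '' {H | IsHyperplaneOf M H}) with hW
  set N := W.map (proj K S) with hN
  haveI : Fintype ↥I := Fintype.ofFinite _
  have hli := diag_li (K := K) (η := η) hME hsupp hB hIB hI.subset
  have hmem : ∀ i : ↥I, proj K S (η (M.closure (B \ {(i : E)}))) ∈ N := fun i =>
    Submodule.mem_map_of_mem (Submodule.subset_span ⟨_, diag_hyp hME hB (hIB i.2), rfl⟩)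
  have hui : LinearIndependent K (fun i : ↥I =>
      (⟨proj K S (η (M.closure (B \ {(i : E)}))), hmem i⟩ : ↥N)) := by
    apply LinearIndependent.of_comp N.subtype
    exact hli
  have hcard := hui.fintype_card_le_finrank
  rw [Basis_mrk hI, ← Nat.card_coe_set_eq, Nat.card_eq_fintype_card]
  exact hcard

lemma upper_bound (hME : M.E = Set.univ)
    (hsupp : ∀ H, IsHyperplaneOf M H → Function.support (η H) = Set.univ \ H)
    (hdep : ∀ H₁ H₂ H₃ : Set E, IsHyperplaneOf M H₁ → IsHyperplaneOf M H₂ →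
      IsHyperplaneOf M H₃ → H₁ ≠ H₂ → H₁ ≠ H₃ → H₂ ≠ H₃ →
      mrk M (H₁ ∩ H₂ ∩ H₃) + 2 = mrk M Set.univ →
      ¬ LinearIndependent K ![η H₁, η H₂, η H₃])
    (S : Set E) :
    finrank K ↥((Submodule.span K (η '' {H | IsHyperplaneOf M H})).map (proj K S))
      ≤ mrk M S := by
  classical
  obtain ⟨I, hI⟩ := M.exists_isBasis S (subset_ground hME S)
  set W := Submodule.span K (η '' {H | IsHyperplaneOf M H}) with hW
  set N := W.map (proj K S) with hN
  obtain ⟨G, hG⟩ : ∃ G : Finset E, ↑G = I :=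
    ⟨(Set.toFinite I).toFinset, (Set.toFinite I).coe_toFinset⟩
  set π : (↥S → K) →ₗ[K] (↥I → K) := LinearMap.funLeft K K (Set.inclusion hI.subset) with hπ
  have hker : ∀ v ∈ N, π v = 0 → v = 0 := by
    rintro _ ⟨w, hw, rfl⟩ hz
    have h0 : ∀ b ∈ G, w b = 0 := by
      intro b hb
      exact congrFun hz ⟨b, hG ▸ hb⟩
    have hw' := vanish_mem_span hME hsupp hdep hw G h0
    funext sval
    show w (sval : E) = 0
    refine span_vanish hsupp (fun H hH => ⟨hH.1, ?_⟩) hw'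
    have hclo : M.closure I ⊆ H := by
      rw [← hH.1.1.closure]
      exact M.closure_subset_closure (hG ▸ hH.2)
    exact hclo (hI.subset_closure sval.2)
  have hinj : Function.Injective (π.comp N.subtype) := by
    rw [← LinearMap.ker_eq_bot, LinearMap.ker_eq_bot']
    intro x hx
    exact Subtype.ext (hker x.1 x.2 hx)
  haveI : Fintype ↥I := Fintype.ofFinite _
  have hle := LinearMap.finrank_le_finrank_of_injective hinj
  rw [Basis_mrk hI, ← Nat.card_coe_set_eq, Nat.card_eq_fintype_card]
  calc finrank K ↥N ≤ finrank K (↥I → K) := hle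
    _ = Fintype.card ↥I := Module.finrank_pi K

end Eta

end Stmt6

/-- if `η` assigns to every hyperplane `H` of a rank-`r` matroid `M` a vector
supported on `E ∖ H`, such that the vectors of any modular triple of hyperplanes (pairwise
distinct, with intersection of corank 2) are linearly dependent, then
`W = span {η_H}` satisfies `M_W = M`; in particular `dim W = r`. -/
theorem stmt6 {K E : Type*} [Field K] [Fintype E] (M : Matroid E) (hME : M.E = Set.univ)
    (r : ℕ) (hr : mrk M Set.univ = r) (η : Set E → (E → K))
    (hsupp : ∀ H, IsHyperplaneOf M H → Function.support (η H) = Set.univ \ H)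
    (hdep : ∀ H₁ H₂ H₃ : Set E, IsHyperplaneOf M H₁ → IsHyperplaneOf M H₂ →
      IsHyperplaneOf M H₃ → H₁ ≠ H₂ → H₁ ≠ H₃ → H₂ ≠ H₃ →
      mrk M (H₁ ∩ H₂ ∩ H₃) + 2 = mrk M Set.univ →
      ¬ LinearIndependent K ![η H₁, η H₂, η H₃]) :
    IsMatroidOf M (Submodule.span K (η '' {H : Set E | IsHyperplaneOf M H})) ∧
    Module.finrank K ↥(Submodule.span K (η '' {H : Set E | IsHyperplaneOf M H})) = r := by
  have hboth : ∀ S : Set E, mrk M S = finrank K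
      ↥((Submodule.span K (η '' {H : Set E | IsHyperplaneOf M H})).map (proj K S)) :=
    fun S => le_antisymm (Stmt6.lower_bound hME hsupp S) (Stmt6.upper_bound hME hsupp hdep S)
  refine ⟨⟨hME, hboth⟩, ?_⟩
  have huniv := hboth Set.univ
  have hsurj : Function.Surjective (Subtype.val : ↥(Set.univ : Set E) → E) :=
    fun e => ⟨⟨e, mem_univ e⟩, rfl⟩
  have hinj : Function.Injective (proj K (Set.univ : Set E)) :=
    LinearMap.funLeft_injective_of_surjective K K _ hsurj
  have hfr := (Submodule.equivMapOfInjective _ hinj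
    (Submodule.span K (η '' {H : Set E | IsHyperplaneOf M H}))).finrank_eq
  rw [hfr, ← huniv]
  exact hr
end

section
/- Let K be a field, E a finite type, M a matroid on E, F a flat of M of corank 2, and 𝓗_F the set of hyperplanes of M containing F. Suppose given for each H ∈ 𝓗_F a vector η_H ∈ K^E with supp(η_H) = E ∖ H. Then the following are equivalent: (i) for every triple of pairwise distinct hyperplanes H₁, H₂, H₃ ∈ 𝓗_F, the vectors η_{H₁}, η_{H₂}, η_{H₃} are K-linearly dependent; (ii) there exists a 2-dimensional linear subspace L ⊆ K^E with η_H ∈ L for all H ∈ 𝓗_F. In that case L = span{η_H : H ∈ 𝓗_F} is the unique such subspace, and the matroid M_L satisfies rank_{M_L}(A) = rank_M(A ∪ F) − rank_M(F) for every A ⊆ E. -/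
open Set Function Module Submodule

set_option linter.unusedSectionVars false
set_option maxHeartbeats 1000000

namespace Stmt8Aux

open Matroid

variable {E : Type*} [Fintype E] {M : Matroid E} {I J S T F G : Set E} {e : E}

lemma flat_closure (M : Matroid E) (X : Set E) : M.IsFlat (M.closure X) := by
  rw [Matroid.closure_def]
  have hne : Nonempty ↑{F : Set E | M.IsFlat F ∧ X ∩ M.E ⊆ F} :=
    ⟨⟨M.E, M.ground_isFlat, inter_subset_right⟩⟩
  rw [sInter_eq_iInter]
  exact Matroid.IsFlat.iInter fun F => F.2.1

lemma flat_inter (hF : M.IsFlat F) (hG : M.IsFlat G) : M.IsFlat (F ∩ G) := by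
  rw [Set.inter_eq_iInter]
  exact Matroid.IsFlat.iInter (by rintro (_|_) <;> simpa)

lemma ncard_le_of_basis' (hI : M.IsBasis' I S) (hJ : M.Indep J) (hJS : J ⊆ S) :
    J.ncard ≤ I.ncard := by
  obtain ⟨J', hJ', hJJ'⟩ := hJ.subset_isBasis'_of_subset hJS
  have h1 : J'.ncard = I.ncard :=
    (Matroid.isBase_restrict_iff'.2 hJ').ncard_eq_ncard_of_isBase (Matroid.isBase_restrict_iff'.2 hI)
  exact le_trans (Set.ncard_le_ncard hJJ' J'.toFinite) h1.le

lemma mrk_eq_of_basis' (hI : M.IsBasis' I S) : mrk M S = I.ncard := by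
  unfold mrk
  apply le_antisymm
  · refine csSup_le ⟨(∅ : Set E).ncard, ⟨∅, ⟨M.empty_indep, empty_subset S⟩, rfl⟩⟩ ?_
    rintro n ⟨J, ⟨h1, h2⟩, rfl⟩
    exact ncard_le_of_basis' hI h1 h2
  · refine le_csSup ⟨I.ncard, ?_⟩ ⟨I, ⟨hI.indep, hI.subset⟩, rfl⟩
    rintro n ⟨J, ⟨h1, h2⟩, rfl⟩
    exact ncard_le_of_basis' hI h1 h2

lemma indep_ncard_le_mrk (hJ : M.Indep J) (hJS : J ⊆ S) : J.ncard ≤ mrk M S := by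
  obtain ⟨I, hI⟩ := M.exists_isBasis' S
  rw [mrk_eq_of_basis' hI]
  exact ncard_le_of_basis' hI hJ hJS

lemma mrk_mono (M : Matroid E) (h : S ⊆ T) : mrk M S ≤ mrk M T := by
  obtain ⟨I, hI⟩ := M.exists_isBasis' S
  rw [mrk_eq_of_basis' hI]
  exact indep_ncard_le_mrk hI.indep (hI.subset.trans h)

lemma mrk_closure (M : Matroid E) (X : Set E) : mrk M (M.closure X) = mrk M X := by
  obtain ⟨I, hI⟩ := M.exists_isBasis' X
  rw [mrk_eq_of_basis' hI, mrk_eq_of_basis' hI.isBasis_closure_right.isBasis']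

lemma mrk_insert_le (M : Matroid E) (e : E) (S : Set E) :
    mrk M (insert e S) ≤ mrk M S + 1 := by
  obtain ⟨I, hI⟩ := M.exists_isBasis' S
  obtain ⟨J, hJ, hIJ⟩ := hI.indep.subset_isBasis'_of_subset
    (hI.subset.trans (subset_insert e S))
  rw [mrk_eq_of_basis' hI, mrk_eq_of_basis' hJ]
  have hsub : J ⊆ insert e I := by
    intro x hxJ
    rcases hJ.subset hxJ with rfl | hxS
    · exact mem_insert _ _
    refine mem_insert_iff.2 (Or.inr ?_)
    by_contra hxI
    exact hI.insert_not_indep ⟨hxS, hxI⟩ (hJ.indep.subset (insert_subset hxJ hIJ))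
  calc J.ncard ≤ (insert e I).ncard := Set.ncard_le_ncard hsub (toFinite _)
    _ ≤ I.ncard + 1 := Set.ncard_insert_le e I

lemma mrk_insert_flat (hF : M.IsFlat F) (he : e ∈ M.E) (heF : e ∉ F) :
    mrk M (insert e F) = mrk M F + 1 := by
  obtain ⟨I, hI⟩ := M.exists_isBasis' F
  have hclI : M.closure I = F := by rw [hI.closure_eq_closure, hF.closure]
  have heI : e ∉ I := fun h => heF (hI.subset h)
  have hind : M.Indep (insert e I) := by
    rw [hI.indep.insert_indep_iff_of_notMem heI, hclI]
    exact ⟨he, heF⟩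
  have h1 : I.ncard + 1 ≤ mrk M (insert e F) := by
    have := indep_ncard_le_mrk hind (insert_subset_insert hI.subset)
    rwa [Set.ncard_insert_of_notMem heI (toFinite I)] at this
  have h2 := mrk_insert_le M e F
  rw [mrk_eq_of_basis' hI] at h2 ⊢
  omega

lemma flat_eq_of_subset_mrk_le (hF : M.IsFlat F) (hG : M.IsFlat G) (hFG : F ⊆ G)
    (hle : mrk M G ≤ mrk M F) : F = G := by
  obtain ⟨I, hI⟩ := M.exists_isBasis' F
  obtain ⟨J, hJ, hIJ⟩ := hI.indep.subset_isBasis'_of_subset (hI.subset.trans hFG)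
  have hc : J.ncard ≤ I.ncard := by
    rw [← mrk_eq_of_basis' hI, ← mrk_eq_of_basis' hJ]; exact hle
  have hIJ' : I = J := Set.eq_of_subset_of_ncard_le hIJ hc (toFinite J)
  rw [← hF.closure, ← hG.closure, ← hI.closure_eq_closure, ← hJ.closure_eq_closure, hIJ']

end Stmt8Aux

section LinHelpers

variable {K V : Type*} [Field K] [AddCommGroup V] [Module K V]

lemma range_pair (x y : V) : Set.range ![x, y] = {x, y} := by
  ext z
  simp [Fin.exists_fin_two]
  tauto

lemma span_pair_finrank_two {x y : V} (h : LinearIndependent K ![x, y]) :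
    finrank K (span K ({x, y} : Set V)) = 2 := by
  rw [← range_pair x y, finrank_span_eq_card h, Fintype.card_fin]

lemma span_pair_finrank_le_one [FiniteDimensional K V] {x y : V} {a b : K}
    (hne : ¬(a = 0 ∧ b = 0)) (h : a • x + b • y = 0) :
    finrank K (span K ({x, y} : Set V)) ≤ 1 := by
  have hsingle : ∀ z : V, finrank K (span K ({z} : Set V)) ≤ 1 := by
    intro z
    simpa using finrank_span_le_card ({z} : Set V)
  rcases not_and_or.1 hne with ha | hb
  · have hx : x = (-(a⁻¹ * b)) • y := by
      have h1 : a • x = -(b • y) := eq_neg_of_add_eq_zero_left h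
      calc x = a⁻¹ • (a • x) := by rw [smul_smul, inv_mul_cancel₀ ha, one_smul]
        _ = (-(a⁻¹ * b)) • y := by rw [h1, smul_neg, smul_smul, ← neg_smul]
    refine le_trans (Submodule.finrank_mono ?_) (hsingle y)
    rw [span_le]
    rintro z (rfl | rfl)
    · exact hx ▸ Submodule.smul_mem _ _ (subset_span rfl)
    · exact subset_span rfl
  · have hy : y = (-(b⁻¹ * a)) • x := by
      have h1 : b • y = -(a • x) := eq_neg_of_add_eq_zero_left (by rwa [add_comm] at h)
      calc y = b⁻¹ • (b • y) := by rw [smul_smul, inv_mul_cancel₀ hb, one_smul]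
        _ = (-(b⁻¹ * a)) • x := by rw [h1, smul_neg, smul_smul, ← neg_smul]
    refine le_trans (Submodule.finrank_mono ?_) (hsingle x)
    rw [span_le]
    rintro z (rfl | rfl)
    · exact subset_span rfl
    · exact hy ▸ Submodule.smul_mem _ _ (subset_span rfl)

lemma span_pair_finrank_pos [FiniteDimensional K V] {x y v : V}
    (hv : v ∈ span K ({x, y} : Set V)) (hv0 : v ≠ 0) :
    0 < finrank K (span K ({x, y} : Set V)) := by
  rw [Module.finrank_pos_iff]
  exact nontrivial_of_ne (⟨v, hv⟩ : span K ({x, y} : Set V)) 0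
    (fun h => hv0 (congrArg Subtype.val h))

end LinHelpers

/-- for a corank-2 flat `F` of `M` and vectors `η_H` (supported on `E ∖ H`) for
the hyperplanes `H ⊇ F`: every triple of pairwise distinct such hyperplanes gives linearly
dependent vectors iff all the `η_H` lie in one 2-dimensional subspace `L`; in that case
`L = span {η_H : H ∈ 𝓗_F}` is unique and `rank_{M_L}(A) = rank_M(A ∪ F) − rank_M(F)`. -/
theorem stmt8 {K E : Type*} [Field K] [Fintype E] (M : Matroid E) (hME : M.E = Set.univ)
    (F : Set E) (hF : M.IsFlat F) (hcork : mrk M F + 2 = mrk M Set.univ)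
    (η : Set E → (E → K))
    (hsupp : ∀ H, IsHyperplaneOf M H → F ⊆ H → Function.support (η H) = Set.univ \ H) :
    ((∀ H₁ H₂ H₃ : Set E, IsHyperplaneOf M H₁ → F ⊆ H₁ → IsHyperplaneOf M H₂ → F ⊆ H₂ →
        IsHyperplaneOf M H₃ → F ⊆ H₃ → H₁ ≠ H₂ → H₁ ≠ H₃ → H₂ ≠ H₃ →
        ¬ LinearIndependent K ![η H₁, η H₂, η H₃]) ↔
      (∃ L : Submodule K (E → K), Module.finrank K ↥L = 2 ∧
        ∀ H, IsHyperplaneOf M H → F ⊆ H → η H ∈ L)) ∧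
    ((∃ L : Submodule K (E → K), Module.finrank K ↥L = 2 ∧
        ∀ H, IsHyperplaneOf M H → F ⊆ H → η H ∈ L) →
      (∀ L : Submodule K (E → K),
        (Module.finrank K ↥L = 2 ∧ ∀ H, IsHyperplaneOf M H → F ⊆ H → η H ∈ L) →
        L = Submodule.span K (η '' {H : Set E | IsHyperplaneOf M H ∧ F ⊆ H})) ∧
      (∀ N : Matroid E,
        IsMatroidOf N (Submodule.span K (η '' {H : Set E | IsHyperplaneOf M H ∧ F ⊆ H})) →
        ∀ A : Set E, mrk N A = mrk M (A ∪ F) - mrk M F)) := by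
  classical
  have hg : ∀ S : Set E, S ⊆ M.E := fun S => by rw [hME]; exact Set.subset_univ S
  have hrkE : mrk M M.E = mrk M F + 2 := by rw [hME, ← hcork]
  have hyp_rank : ∀ H : Set E, IsHyperplaneOf M H → mrk M H = mrk M F + 1 := by
    intro H h
    have := h.2
    omega
  have hyp_exists : ∀ a : E, a ∉ F → ∃ H : Set E, IsHyperplaneOf M H ∧ F ⊆ H ∧ a ∈ H := by
    intro a ha
    refine ⟨M.closure (insert a F), ⟨Stmt8Aux.flat_closure M _, ?_⟩, ?_, ?_⟩
    · rw [Stmt8Aux.mrk_closure,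
        Stmt8Aux.mrk_insert_flat hF (by rw [hME]; trivial) ha, hrkE]
    · exact (subset_insert a F).trans (M.subset_closure _ (hg _))
    · exact M.subset_closure _ (hg _) (mem_insert a F)
  have hyp_ne_univ : ∀ H : Set E, IsHyperplaneOf M H → ∃ x, x ∉ H := by
    intro H h
    by_contra hcon
    push_neg at hcon
    have hU : H = univ := eq_univ_of_forall hcon
    have h2 := h.2
    rw [hU, hME] at h2
    omega
  have hyp_ne_subset : ∀ H H' : Set E, IsHyperplaneOf M H → IsHyperplaneOf M H' → H ≠ H' →
      ∃ x, x ∈ H' ∧ x ∉ H := by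
    intro H H' h h' hne
    rw [← Set.not_subset]
    intro hsub
    exact hne (Stmt8Aux.flat_eq_of_subset_mrk_le h'.1 h.1 hsub
      (by rw [hyp_rank H h, hyp_rank H' h'])).symm
  have hyp_inter : ∀ H H' : Set E, IsHyperplaneOf M H → F ⊆ H → IsHyperplaneOf M H' → F ⊆ H' →
      H ≠ H' → H ∩ H' = F := by
    intro H H' h hFH h' hFH' hne
    have hflat := Stmt8Aux.flat_inter h.1 h'.1
    by_cases hlt : mrk M (H ∩ H') ≤ mrk M F
    · exact (Stmt8Aux.flat_eq_of_subset_mrk_le hF hflat (subset_inter hFH hFH') hlt).symm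
    · exfalso
      push_neg at hlt
      have h1 : mrk M H ≤ mrk M (H ∩ H') := by rw [hyp_rank H h]; omega
      have e1 := Stmt8Aux.flat_eq_of_subset_mrk_le hflat h.1 inter_subset_left h1
      have h2 : mrk M H' ≤ mrk M (H ∩ H') := by rw [hyp_rank H' h']; omega
      have e2 := Stmt8Aux.flat_eq_of_subset_mrk_le hflat h'.1 inter_subset_right h2
      exact hne (e1.symm.trans e2)
  have hyp_second : ∀ H : Set E, IsHyperplaneOf M H → F ⊆ H →
      ∃ H' : Set E, IsHyperplaneOf M H' ∧ F ⊆ H' ∧ H' ≠ H := by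
    intro H h hFH
    obtain ⟨b, hb⟩ := hyp_ne_univ H h
    obtain ⟨H', h', hFH', hbH'⟩ := hyp_exists b (fun hbF => hb (hFH hbF))
    exact ⟨H', h', hFH', fun he => hb (he ▸ hbH')⟩
  have hyp_avoid : ∀ a : E, a ∉ F → ∃ H : Set E, IsHyperplaneOf M H ∧ F ⊆ H ∧ a ∉ H := by
    intro a ha
    obtain ⟨H, h, hFH, haH⟩ := hyp_exists a ha
    obtain ⟨H', h', hFH', hne⟩ := hyp_second H h hFH
    refine ⟨H', h', hFH', fun haH' => ha ?_⟩
    have hint := hyp_inter H' H h' hFH' h hFH hne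
    exact hint ▸ ⟨haH', haH⟩
  obtain ⟨a0, ha0⟩ : ∃ a, a ∉ F := by
    by_contra hcon
    push_neg at hcon
    have : F = univ := eq_univ_of_forall hcon
    rw [this] at hcork
    omega
  obtain ⟨H₁, hH₁, hFH₁, -⟩ := hyp_exists a0 ha0
  obtain ⟨H₂, hH₂, hFH₂, hne21⟩ := hyp_second H₁ hH₁ hFH₁
  have hzero : ∀ H : Set E, IsHyperplaneOf M H → F ⊆ H → ∀ x : E, (η H x = 0 ↔ x ∈ H) := by
    intro H h hFH x
    have hs := hsupp H h hFH
    constructor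
    · intro h0
      by_contra hxH
      have hx : x ∈ Function.support (η H) := by rw [hs]; exact ⟨mem_univ x, hxH⟩
      exact hx h0
    · intro hxH
      by_contra h0
      have hx : x ∈ univ \ H := by rw [← hs]; exact h0
      exact hx.2 hxH
  have hne0 : ∀ H : Set E, IsHyperplaneOf M H → F ⊆ H → η H ≠ 0 := by
    intro H h hFH hcon
    obtain ⟨x, hx⟩ := hyp_ne_univ H h
    exact hx ((hzero H h hFH x).1 (by rw [hcon]; rfl))
  have hpair : ∀ H H' : Set E, IsHyperplaneOf M H → F ⊆ H → IsHyperplaneOf M H' → F ⊆ H' →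
      H ≠ H' → ∀ a b : K, a • η H + b • η H' = 0 → a = 0 ∧ b = 0 := by
    intro H H' h hFH h' hFH' hne a b heq
    obtain ⟨x, hxH', hxH⟩ := hyp_ne_subset H H' h h' hne
    obtain ⟨y, hyH, hyH'⟩ := hyp_ne_subset H' H h' h hne.symm
    have hx0 : η H' x = 0 := (hzero H' h' hFH' x).2 hxH'
    have hx1 : η H x ≠ 0 := fun hc => hxH ((hzero H h hFH x).1 hc)
    have hy0 : η H y = 0 := (hzero H h hFH y).2 hyH
    have hy1 : η H' y ≠ 0 := fun hc => hyH' ((hzero H' h' hFH' y).1 hc)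
    have ex := congrFun heq x
    have ey := congrFun heq y
    simp only [Pi.add_apply, Pi.smul_apply, smul_eq_mul, Pi.zero_apply, hx0, hy0,
      mul_zero, add_zero, zero_add] at ex ey
    constructor
    · rcases mul_eq_zero.1 ex with h'' | h''
      · exact h''
      · exact absurd h'' hx1
    · rcases mul_eq_zero.1 ey with h'' | h''
      · exact h''
      · exact absurd h'' hy1
  have hli12 : LinearIndependent K ![η H₁, η H₂] :=
    LinearIndependent.pair_iff.2
      (fun s t hst => hpair H₁ H₂ hH₁ hFH₁ hH₂ hFH₂ hne21.symm s t hst)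
  have hiff : (∀ H₁' H₂' H₃' : Set E, IsHyperplaneOf M H₁' → F ⊆ H₁' → IsHyperplaneOf M H₂' →
      F ⊆ H₂' → IsHyperplaneOf M H₃' → F ⊆ H₃' → H₁' ≠ H₂' → H₁' ≠ H₃' → H₂' ≠ H₃' →
      ¬ LinearIndependent K ![η H₁', η H₂', η H₃']) ↔
      (∃ L : Submodule K (E → K), Module.finrank K ↥L = 2 ∧
        ∀ H, IsHyperplaneOf M H → F ⊆ H → η H ∈ L) := by
    constructor
    · intro htriple
      refine ⟨span K ({η H₁, η H₂} : Set (E → K)), span_pair_finrank_two hli12, ?_⟩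
      intro H h hFH
      by_cases he1 : H = H₁
      · subst he1; exact subset_span (mem_insert _ _)
      by_cases he2 : H = H₂
      · subst he2; exact subset_span (mem_insert_of_mem _ rfl)
      have hdep := htriple H₁ H₂ H hH₁ hFH₁ hH₂ hFH₂ h hFH hne21.symm
        (Ne.symm he1) (Ne.symm he2)
      rw [Fintype.not_linearIndependent_iff] at hdep
      obtain ⟨g, hgsum, i, hgi⟩ := hdep
      rw [Fin.sum_univ_three] at hgsum
      simp only [Matrix.cons_val_zero, Matrix.cons_val_one, Matrix.head_cons,
        Matrix.cons_val_two, Matrix.tail_cons] at hgsum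
      by_cases hg2 : g 2 = 0
      · exfalso
        rw [hg2, zero_smul, add_zero] at hgsum
        obtain ⟨e0, e1⟩ := hpair H₁ H₂ hH₁ hFH₁ hH₂ hFH₂ hne21.symm _ _ hgsum
        exact hgi (by fin_cases i <;> assumption)
      · refine Submodule.mem_span_pair.2 ⟨-(g 0) / g 2, -(g 1) / g 2, ?_⟩
        have hexp : η H = (g 2)⁻¹ • (g 2 • η H) := by
          rw [smul_smul, inv_mul_cancel₀ hg2, one_smul]
        have h2 := eq_neg_of_add_eq_zero_right hgsum
        rw [hexp, h2]
        match_scalars <;> field_simp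
    · rintro ⟨L, hL2, hLmem⟩ G₁ G₂ G₃ hG₁ hFG₁ hG₂ hFG₂ hG₃ hFG₃ h12 h13 h23 hli
      have hmem : ∀ i : Fin 3, ![η G₁, η G₂, η G₃] i ∈ L := by
        intro i
        fin_cases i
        · exact hLmem G₁ hG₁ hFG₁
        · exact hLmem G₂ hG₂ hFG₂
        · exact hLmem G₃ hG₃ hFG₃
      have hliu : LinearIndependent K
          (fun i : Fin 3 => (⟨![η G₁, η G₂, η G₃] i, hmem i⟩ : L)) := by
        apply LinearIndependent.of_comp L.subtype
        have he : (L.subtype ∘ fun i : Fin 3 =>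
            (⟨![η G₁, η G₂, η G₃] i, hmem i⟩ : L)) = ![η G₁, η G₂, η G₃] :=
          funext fun _ => rfl
        rwa [he]
      have hcard := hliu.fintype_card_le_finrank
      rw [hL2, Fintype.card_fin] at hcard
      omega
  refine ⟨hiff, ?_⟩
  rintro ⟨L0, hL0r, hL0mem⟩
  have hPr : finrank K (span K ({η H₁, η H₂} : Set (E → K))) = 2 := span_pair_finrank_two hli12
  have huniq : ∀ L : Submodule K (E → K),
      (finrank K L = 2 ∧ ∀ H, IsHyperplaneOf M H → F ⊆ H → η H ∈ L) →
      span K ({η H₁, η H₂} : Set (E → K)) = L := by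
    rintro L ⟨hLr, hLm⟩
    have h1 : span K ({η H₁, η H₂} : Set (E → K)) ≤ L :=
      span_le.2 (insert_subset (hLm H₁ hH₁ hFH₁)
        (singleton_subset_iff.2 (hLm H₂ hH₂ hFH₂)))
    exact Submodule.eq_of_le_of_finrank_le h1 (by rw [hPr, hLr])
  have hSAmem : ∀ H, IsHyperplaneOf M H → F ⊆ H →
      η H ∈ span K (η '' {H : Set E | IsHyperplaneOf M H ∧ F ⊆ H}) :=
    fun H h1 h2 => subset_span ⟨H, ⟨h1, h2⟩, rfl⟩
  have hP_le_SA : span K ({η H₁, η H₂} : Set (E → K)) ≤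
      span K (η '' {H : Set E | IsHyperplaneOf M H ∧ F ⊆ H}) :=
    span_le.2 (insert_subset (hSAmem H₁ hH₁ hFH₁)
      (singleton_subset_iff.2 (hSAmem H₂ hH₂ hFH₂)))
  have hP_L0 := huniq L0 ⟨hL0r, hL0mem⟩
  have hSA_le_L0 : span K (η '' {H : Set E | IsHyperplaneOf M H ∧ F ⊆ H}) ≤ L0 :=
    span_le.2 (by rintro v ⟨H, ⟨h1, h2⟩, rfl⟩; exact hL0mem H h1 h2)
  have hSA_eq_L0 : span K (η '' {H : Set E | IsHyperplaneOf M H ∧ F ⊆ H}) = L0 :=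
    le_antisymm hSA_le_L0 (hP_L0 ▸ hP_le_SA)
  have hPSA : span K ({η H₁, η H₂} : Set (E → K)) =
      span K (η '' {H : Set E | IsHyperplaneOf M H ∧ F ⊆ H}) :=
    huniq _ ⟨by rw [hSA_eq_L0, hL0r], hSAmem⟩
  refine ⟨fun L hL => (huniq L hL).symm.trans hPSA, ?_⟩
  intro N hN A
  rw [hN.2 A, ← hPSA, Submodule.map_span, Set.image_pair]
  have hm1 : mrk M F ≤ mrk M (A ∪ F) := Stmt8Aux.mrk_mono M subset_union_right
  have hm2 : mrk M (A ∪ F) ≤ mrk M F + 2 := by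
    rw [hcork]; exact Stmt8Aux.mrk_mono M (subset_univ _)
  have hsubF : mrk M (A ∪ F) = mrk M F → A ⊆ F := by
    intro hm
    have hcl : F = M.closure (A ∪ F) :=
      Stmt8Aux.flat_eq_of_subset_mrk_le hF (Stmt8Aux.flat_closure M _)
        (subset_union_right.trans (M.subset_closure _ (hg _)))
        (by rw [Stmt8Aux.mrk_closure, hm])
    exact (subset_union_left.trans (M.subset_closure _ (hg _))).trans hcl.symm.subset
  have hhypAF : mrk M (A ∪ F) ≤ mrk M F + 1 →
      ∃ H : Set E, IsHyperplaneOf M H ∧ F ⊆ H ∧ A ⊆ H := by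
    intro hm
    rcases Nat.lt_or_ge (mrk M (A ∪ F)) (mrk M F + 1) with hlt | hge
    · have hA : A ⊆ F := hsubF (by omega)
      exact ⟨H₁, hH₁, hFH₁, hA.trans hFH₁⟩
    · have heq : mrk M (A ∪ F) = mrk M F + 1 := le_antisymm hm hge
      refine ⟨M.closure (A ∪ F), ⟨Stmt8Aux.flat_closure M _, ?_⟩, ?_, ?_⟩
      · rw [Stmt8Aux.mrk_closure, heq, hrkE]
      · exact subset_union_right.trans (M.subset_closure _ (hg _))
      · exact subset_union_left.trans (M.subset_closure _ (hg _))
  have hmemP : ∀ H : Set E, IsHyperplaneOf M H → F ⊆ H →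
      ∃ c d : K, c • η H₁ + d • η H₂ = η H := by
    intro H h1 h2
    have hm := hSAmem H h1 h2
    rw [← hPSA] at hm
    exact Submodule.mem_span_pair.1 hm
  rcases show mrk M (A ∪ F) = mrk M F ∨ mrk M (A ∪ F) = mrk M F + 1 ∨
      mrk M (A ∪ F) = mrk M F + 2 by omega with hc | hc | hc
  · -- rank 0 case
    have hA : A ⊆ F := hsubF hc
    have hz : ∀ H : Set E, IsHyperplaneOf M H → F ⊆ H → proj K A (η H) = 0 := by
      intro H h1 h2
      funext x
      exact (hzero H h1 h2 x.1).2 (h2 (hA x.2))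
    rw [hz H₁ hH₁ hFH₁, hz H₂ hH₂ hFH₂, Set.pair_eq_singleton,
      Submodule.span_zero_singleton, hc]
    simp
  · -- rank 1 case
    obtain ⟨H, hHh, hFH, hAH⟩ := hhypAF (by omega)
    obtain ⟨c, d, hcd⟩ := hmemP H hHh hFH
    have hproj0 : proj K A (η H) = 0 := by
      funext x
      exact (hzero H hHh hFH x.1).2 (hAH x.2)
    have hcd0 : ¬(c = 0 ∧ d = 0) := by
      rintro ⟨rfl, rfl⟩
      apply hne0 H hHh hFH
      rw [← hcd]
      simp
    have hdep : c • proj K A (η H₁) + d • proj K A (η H₂) = 0 := by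
      rw [← map_smul, ← map_smul, ← map_add, hcd, hproj0]
    have hle := span_pair_finrank_le_one hcd0 hdep
    have hnotA : ¬ A ⊆ F := by
      intro h
      rw [union_eq_self_of_subset_left h] at hc
      omega
    obtain ⟨x0, hx0A, hx0F⟩ := Set.not_subset.1 hnotA
    obtain ⟨H', hH', hFH', hx0H'⟩ := hyp_avoid x0 hx0F
    obtain ⟨c', d', hcd'⟩ := hmemP H' hH' hFH'
    have hmem : proj K A (η H') ∈
        span K ({proj K A (η H₁), proj K A (η H₂)} : Set (↥A → K)) := by
      rw [← hcd', map_add, map_smul, map_smul]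
      exact add_mem (smul_mem _ _ (subset_span (mem_insert _ _)))
        (smul_mem _ _ (subset_span (mem_insert_of_mem _ rfl)))
    have hne' : proj K A (η H') ≠ 0 := by
      intro h0
      have h1 := congrFun h0 ⟨x0, hx0A⟩
      exact hx0H' ((hzero H' hH' hFH' x0).1 h1)
    have hpos := span_pair_finrank_pos hmem hne'
    rw [hc, Nat.add_sub_cancel_left]
    omega
  · -- rank 2 case
    have hli' : LinearIndependent K ![proj K A (η H₁), proj K A (η H₂)] := by
      rw [LinearIndependent.pair_iff]
      intro a b hab
      by_contra hcon
      have hpt : ∀ x ∈ A, a * η H₁ x + b * η H₂ x = 0 := by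
        intro x hx
        have h1 := congrFun hab ⟨x, hx⟩
        simpa only [Pi.add_apply, Pi.smul_apply, smul_eq_mul, Pi.zero_apply, proj,
            LinearMap.funLeft_apply] using h1
      have hAH : ∃ H : Set E, IsHyperplaneOf M H ∧ F ⊆ H ∧ A ⊆ H := by
        by_cases hb : b = 0
        · have ha : a ≠ 0 := by tauto
          refine ⟨H₁, hH₁, hFH₁, fun x hx => ?_⟩
          have h1 := hpt x hx
          rw [hb, zero_mul, add_zero] at h1
          refine (hzero H₁ hH₁ hFH₁ x).1 ?_
          rcases mul_eq_zero.1 h1 with h' | h'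
          · exact absurd h' ha
          · exact h'
        by_cases ha : a = 0
        · refine ⟨H₂, hH₂, hFH₂, fun x hx => ?_⟩
          have h1 := hpt x hx
          rw [ha, zero_mul, zero_add] at h1
          refine (hzero H₂ hH₂ hFH₂ x).1 ?_
          rcases mul_eq_zero.1 h1 with h' | h'
          · exact absurd h' hb
          · exact h'
        by_cases hAF : A ⊆ F
        · exact ⟨H₁, hH₁, hFH₁, hAF.trans hFH₁⟩
        obtain ⟨x0, hx0A, hx0F⟩ := Set.not_subset.1 hAF
        have e2 := hpt x0 hx0A
        have hinter := hyp_inter H₁ H₂ hH₁ hFH₁ hH₂ hFH₂ hne21.symm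
        have hx0H₁ : x0 ∉ H₁ := by
          intro hmem1
          have h10 : η H₁ x0 = 0 := (hzero H₁ hH₁ hFH₁ x0).2 hmem1
          rw [h10, mul_zero, zero_add] at e2
          have h20 : x0 ∈ H₂ := by
            refine (hzero H₂ hH₂ hFH₂ x0).1 ?_
            rcases mul_eq_zero.1 e2 with h' | h'
            · exact absurd h' hb
            · exact h'
          exact hx0F (hinter ▸ ⟨hmem1, h20⟩)
        have hx0H₂ : x0 ∉ H₂ := by
          intro hmem2
          have h20 : η H₂ x0 = 0 := (hzero H₂ hH₂ hFH₂ x0).2 hmem2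
          rw [h20, mul_zero, add_zero] at e2
          have h10 : x0 ∈ H₁ := by
            refine (hzero H₁ hH₁ hFH₁ x0).1 ?_
            rcases mul_eq_zero.1 e2 with h' | h'
            · exact absurd h' ha
            · exact h'
          exact hx0F (hinter ▸ ⟨h10, hmem2⟩)
        have h1x0 : η H₁ x0 ≠ 0 := fun h' => hx0H₁ ((hzero H₁ hH₁ hFH₁ x0).1 h')
        have h2x0 : η H₂ x0 ≠ 0 := fun h' => hx0H₂ ((hzero H₂ hH₂ hFH₂ x0).1 h')
        obtain ⟨H₃, hH₃, hFH₃, hx0H₃⟩ := hyp_exists x0 hx0F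
        obtain ⟨c, d, hcd⟩ := hmemP H₃ hH₃ hFH₃
        have e3 : c * η H₁ x0 + d * η H₂ x0 = 0 := by
          have h1 := congrFun hcd x0
          simpa only [Pi.add_apply, Pi.smul_apply, smul_eq_mul,
            (hzero H₃ hH₃ hFH₃ x0).2 hx0H₃] using h1
        have hd : d ≠ 0 := by
          intro hd0
          rw [hd0, zero_mul, add_zero] at e3
          have hc0 : c = 0 := by
            rcases mul_eq_zero.1 e3 with h' | h'
            · exact h'
            · exact absurd h' h1x0
          apply hne0 H₃ hH₃ hFH₃
          rw [← hcd, hc0, hd0]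
          simp
        have had : a * d = b * c := by
          apply mul_right_cancel₀ h1x0
          linear_combination d * e2 - b * e3
        refine ⟨H₃, hH₃, hFH₃, fun x hx => ?_⟩
        have e1 := hpt x hx
        have e4 : c * η H₁ x + d * η H₂ x = η H₃ x := by
          have h1 := congrFun hcd x
          simpa only [Pi.add_apply, Pi.smul_apply, smul_eq_mul] using h1
        have hb3 : b * η H₃ x = 0 := by
          linear_combination (-b) * e4 + d * e1 - (η H₁ x) * had
        refine (hzero H₃ hH₃ hFH₃ x).1 ?_
        rcases mul_eq_zero.1 hb3 with h' | h'
        · exact absurd h' hb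
        · exact h'
      obtain ⟨H, hHh, hFH, hAH⟩ := hAH
      have hle2 : mrk M (A ∪ F) ≤ mrk M F + 1 := by
        calc mrk M (A ∪ F) ≤ mrk M H := Stmt8Aux.mrk_mono M (union_subset hAH hFH)
          _ = mrk M F + 1 := hyp_rank H hHh
      omega
    rw [span_pair_finrank_two hli', hc]
    omega
end

section
/- Let K be a field, E a finite type, W ⊆ K^E a linear subspace, and B ⊆ E a subset such that the coordinate projection π_B : K^E → K^B restricts to a linear isomorphism W ≃ K^B. Let (S_i)_{i∈B} be the family of elements of W determined by (S_i)_j = δ_{ij} for all i, j ∈ B (the normal basis of W indexed by B). Then every S_i is an elementary vector of W: S_i ≠ 0 and there is no nonzero v ∈ W with supp(v) ⊊ supp(S_i). -/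
open Set Function Module Submodule

/-- An elementary vector of `W`: a nonzero element of `W` of support-minimal support. -/
def IsElementary {K E : Type*} [Field K] (W : Submodule K (E → K)) (w : E → K) : Prop :=
  w ∈ W ∧ w ≠ 0 ∧ ∀ v ∈ W, v ≠ 0 → ¬ (Function.support v ⊂ Function.support w)

/-- if `π_B` restricts to an isomorphism `W ≃ K^B` and `(S_i)_{i ∈ B}` is the
normal basis of `W` indexed by `B` (i.e. `S_i ∈ W` with `(S_i)_j = δ_{ij}` for `i, j ∈ B`),
then every `S_i` is an elementary vector of `W`. -/
theorem stmt10 {K E : Type*} [Field K] [Fintype E] (W : Submodule K (E → K)) (B : Set E)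
    (hB : Function.Bijective ((proj K B) ∘ₗ W.subtype))
    (S : ↥B → (E → K)) (hSW : ∀ i, S i ∈ W)
    (hS1 : ∀ i : ↥B, S i (i : E) = 1)
    (hS0 : ∀ i j : ↥B, i ≠ j → S i (j : E) = 0) :
    ∀ i : ↥B, IsElementary W (S i) := by
  intro i
  refine ⟨hSW i, ?_, ?_⟩
  · intro h
    have h1 := hS1 i
    rw [h] at h1
    simp at h1
  · intro v hv hv0 hss
    have hsub : Function.support v ⊆ Function.support (S i) := hss.subset
    have hproj : proj K B (v - v ↑i • S i) = 0 := by
      funext j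
      simp only [proj, LinearMap.funLeft_apply, Pi.sub_apply, Pi.smul_apply, smul_eq_mul,
        Pi.zero_apply]
      by_cases hij : j = i
      · subst hij; rw [hS1]; ring
      · have hSij : S i ↑j = 0 := hS0 i j (Ne.symm hij)
        have hvj : v ↑j = 0 := by
          by_contra hne
          exact (hsub hne) hSij
        rw [hvj, hSij]; ring
    have hmem : v - v ↑i • S i ∈ W := W.sub_mem hv (W.smul_mem _ (hSW i))
    have hzero : (⟨v - v ↑i • S i, hmem⟩ : W) = (0 : W) := by
      apply hB.injective
      simpa using hproj
    have hveq : v = v ↑i • S i := by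
      have := congrArg Subtype.val hzero
      simpa [sub_eq_zero] using this
    by_cases hvi : v ↑i = 0
    · exact hv0 (by rw [hveq, hvi, zero_smul])
    · have hsupp : Function.support v = Function.support (S i) := by
        rw [hveq, Function.support_const_smul_of_ne_zero _ _ hvi]
      exact hss.ne hsupp
end

section
/- Let K be a field, E a finite type, and W ⊆ K^E a linear subspace. Then W is spanned by its elementary vectors: every element of W is a K-linear combination of nonzero vectors w ∈ W with the property that no nonzero v ∈ W satisfies supp(v) ⊊ supp(w). -/
open Set Function Module Submodule

/-- every linear subspace `W ⊆ K^E` is spanned by its elementary vectors. -/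
theorem stmt11 {K E : Type*} [Field K] [Fintype E] (W : Submodule K (E → K)) :
    Submodule.span K {w : E → K | IsElementary W w} = W := by
  apply le_antisymm
  · exact span_le.2 fun w hw => hw.1
  · intro w hw
    have key : ∀ n (w : E → K), w ∈ W → (Function.support w).ncard ≤ n →
        w ∈ Submodule.span K {w : E → K | IsElementary W w} := by
      intro n
      induction n with
      | zero =>
        intro w hw hc
        have h0 : Function.support w = ∅ := by
          have := Set.ncard_eq_zero (s := Function.support w) (Set.toFinite _)
          exact this.1 (Nat.le_zero.1 hc)
        have : w = 0 := by
          funext i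
          by_contra hi
          exact absurd (Set.eq_empty_iff_forall_notMem.1 h0 i) (by simpa using hi)
        simp [this]
      | succ n ih =>
        intro w hw hc
        by_cases hw0 : w = 0
        · simp [hw0]
        by_cases helem : IsElementary W w
        · exact subset_span helem
        · have hex : ∃ v ∈ W, v ≠ 0 ∧ Function.support v ⊂ Function.support w := by
            by_contra hno
            push_neg at hno
            exact helem ⟨hw, hw0, fun v hv hv0 => hno v hv hv0⟩
          obtain ⟨v, hvW, hv0, hsub⟩ := hex
          obtain ⟨i, hi⟩ : ∃ i, v i ≠ 0 := by
            by_contra h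
            push_neg at h
            exact hv0 (funext fun i => h i)
          have hiw : w i ≠ 0 := hsub.subset hi
          set c : K := w i / v i with hc'
          have hmem : w - c • v ∈ W := W.sub_mem hw (W.smul_mem c hvW)
          have hsupsub : Function.support (w - c • v) ⊂ Function.support w := by
            constructor
            · intro j hj
              by_contra hjw
              have hw0j : w j = 0 := Function.notMem_support.1 hjw
              have hv0j : v j = 0 := by
                by_contra hvj
                exact hjw (hsub.subset hvj)
              simp [Function.mem_support, hw0j, hv0j] at hj
            · intro habs
              have : (w - c • v) i = 0 := by
                simp [hc', Pi.sub_apply, div_mul_cancel₀ _ hi]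
              exact (Function.mem_support.1 (habs hiw)) this
          have hcard1 : (Function.support (w - c • v)).ncard ≤ n := by
            have := Set.ncard_lt_ncard hsupsub (Set.toFinite _)
            omega
          have hcard2 : (Function.support v).ncard ≤ n := by
            have := Set.ncard_lt_ncard hsub (Set.toFinite _)
            omega
          have h1 := ih (w - c • v) hmem hcard1
          have h2 := ih v hvW hcard2
          have : w = (w - c • v) + c • v := by ring
          rw [this]
          exact Submodule.add_mem _ h1 (Submodule.smul_mem _ c h2)
    exact key _ w hw le_rfl
end

section
/- Let K be a field, E a finite type, and W ⊆ K^E a linear subspace. Then for every w ∈ W and every i ∈ supp(w), there exists an elementary vector v of W with i ∈ supp(v) and supp(v) ⊆ supp(w). In particular, the support of every element of W is a union of supports of elementary vectors of W. -/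
open Set Function Module Submodule

lemma key_aux {K E : Type*} [Field K] [Fintype E] (W : Submodule K (E → K)) :
    ∀ n : ℕ, ∀ w : E → K, (Function.support w).ncard ≤ n → w ∈ W →
      ∀ i ∈ Function.support w, ∃ v : E → K, IsElementary W v ∧
        i ∈ Function.support v ∧ Function.support v ⊆ Function.support w := by
  intro n
  induction n with
  | zero =>
    intro w hcard _ i hi
    have hne : (Function.support w).Nonempty := ⟨i, hi⟩
    have := Set.ncard_pos (Set.toFinite _) |>.mpr hne
    omega
  | succ n ih =>
    intro w hcard hw i hi
    by_cases h : ∀ v ∈ W, v ≠ 0 → ¬ (Function.support v ⊂ Function.support w)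
    · exact ⟨w, ⟨hw, fun h0 => by simp [h0] at hi, h⟩, hi, subset_rfl⟩
    · push_neg at h
      obtain ⟨u, huW, hu0, hss⟩ := h
      have husub : Function.support u ⊆ Function.support w := hss.subset
      by_cases hiu : i ∈ Function.support u
      · have hlt : (Function.support u).ncard < (Function.support w).ncard :=
          Set.ncard_lt_ncard hss (Set.toFinite _)
        obtain ⟨v, hv, hiv, hvsub⟩ := ih u (by omega) huW i hiu
        exact ⟨v, hv, hiv, hvsub.trans husub⟩
      · obtain ⟨j, hj⟩ := Function.support_nonempty_iff.mpr hu0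
        have hjw : j ∈ Function.support w := husub hj
        set w' : E → K := w - (w j / u j) • u with hw'
        have hw'W : w' ∈ W := W.sub_mem hw (W.smul_mem _ huW)
        have hw'j : w' j = 0 := by
          simp only [hw', Pi.sub_apply, Pi.smul_apply, smul_eq_mul]
          rw [div_mul_cancel₀ _ (Function.mem_support.mp hj), sub_self]
        have hw'sub : Function.support w' ⊆ Function.support w \ {j} := by
          intro x hx
          refine ⟨?_, ?_⟩
          · by_contra hxw
            simp only [Function.mem_support, not_not] at hxw
            have hxu : u x = 0 := by
              by_contra hxu
              exact (husub hxu) hxw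
            apply hx
            simp [hw', hxw, hxu]
          · rintro rfl
            exact hx hw'j
        have hiw' : i ∈ Function.support w' := by
          have hui : u i = 0 := by simpa using hiu
          simp only [Function.mem_support, hw', Pi.sub_apply, Pi.smul_apply, smul_eq_mul,
            hui, mul_zero, sub_zero]
          exact hi
        have hcard' : (Function.support w').ncard ≤ n := by
          have h1 : (Function.support w').ncard ≤ (Function.support w \ {j}).ncard :=
            Set.ncard_le_ncard hw'sub (Set.toFinite _)
          have h2 : (Function.support w \ {j}).ncard < (Function.support w).ncard :=
            Set.ncard_diff_singleton_lt_of_mem hjw (Set.toFinite _)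
          omega
        obtain ⟨v, hv, hiv, hvsub⟩ := ih w' hcard' hw'W i hiw'
        exact ⟨v, hv, hiv, hvsub.trans (hw'sub.trans (Set.diff_subset))⟩

/-- for every `w ∈ W` and every `i` in the support of `w` there is an
elementary vector `v` of `W` with `i ∈ supp(v) ⊆ supp(w)`; in particular the support of every
element of `W` is a union of supports of elementary vectors of `W`. -/
theorem stmt12 {K E : Type*} [Field K] [Fintype E] (W : Submodule K (E → K)) :
    (∀ w ∈ W, ∀ i ∈ Function.support w, ∃ v : E → K, IsElementary W v ∧
      i ∈ Function.support v ∧ Function.support v ⊆ Function.support w) ∧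
    (∀ w ∈ W, Function.support w =
      ⋃ v ∈ {v : E → K | IsElementary W v ∧ Function.support v ⊆ Function.support w},
        Function.support v) := by
  have key := key_aux W
  constructor
  · intro w hw i hi
    exact key (Function.support w).ncard w le_rfl hw i hi
  · intro w hw
    ext i
    simp only [Set.mem_iUnion, Set.mem_setOf_eq]
    constructor
    · intro hi
      obtain ⟨v, hv, hiv, hvsub⟩ := key (Function.support w).ncard w le_rfl hw i hi
      exact ⟨v, ⟨hv, hvsub⟩, hiv⟩
    · rintro ⟨v, ⟨_, hvsub⟩, hiv⟩
      exact hvsub hiv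
end

section
/- Let K be a field, E a finite type, and W ⊆ K^E a linear subspace. Then a subset C ⊆ E is a cocircuit of the matroid M_W (i.e., the complement of a hyperplane of M_W) if and only if C = supp(w) for some elementary vector w of W. -/
open Set Function Module Submodule

/-- A cocircuit of a matroid: the complement (in the ground set) of a hyperplane. -/
def IsCocircuitOf {E : Type*} (M : Matroid E) (C : Set E) : Prop :=
  ∃ H, IsHyperplaneOf M H ∧ C = M.E \ H

section Aux

variable {K E : Type*} [Field K]

lemma mem_ker_proj {S : Set E} {x : E → K} :
    x ∈ LinearMap.ker (proj K S) ↔ ∀ i ∈ S, x i = 0 := by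
  constructor
  · intro h i hi
    exact congrFun (LinearMap.mem_ker.mp h) ⟨i, hi⟩
  · intro h
    ext i
    exact h i i.2

set_option synthInstance.maxHeartbeats 400000 in
lemma rank_nullity [Fintype E] (W : Submodule K (E → K)) (S : Set E) :
    finrank K ↥(W.map (proj K S)) + finrank K ↥(W ⊓ LinearMap.ker (proj K S)) = finrank K W := by
  have h := LinearMap.finrank_range_add_finrank_ker ((proj K S).domRestrict W)
  rw [LinearMap.range_domRestrict] at h
  rw [← h]
  congr 1
  rw [LinearMap.ker_domRestrict]
  have hle : W ⊓ LinearMap.ker (proj K S) ≤ W := inf_le_left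
  have hc : (LinearMap.ker (proj K S)).comap W.subtype
      = (W ⊓ LinearMap.ker (proj K S)).comap W.subtype := by
    rw [Submodule.comap_inf, Submodule.comap_subtype_self, top_inf_eq]
  rw [hc]
  exact ((Submodule.comapSubtypeEquivOfLe hle).finrank_eq).symm

lemma mrk_eq_ncard {E : Type*} [Fintype E] {M : Matroid E} {I S : Set E}
    (hI : M.IsBasis I S) : mrk M S = I.ncard := by
  have hub : ∀ n ∈ Set.ncard '' {J : Set E | M.Indep J ∧ J ⊆ S}, n ≤ I.ncard := by
    rintro _ ⟨J, ⟨hJi, hJS⟩, rfl⟩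
    obtain ⟨J', hJ', hJJ'⟩ := hJi.subset_isBasis_of_subset hJS hI.subset_ground
    calc J.ncard ≤ J'.ncard := Set.ncard_le_ncard hJJ' J'.toFinite
    _ = I.ncard := by rw [Set.ncard_def, hJ'.encard_eq_encard hI, ← Set.ncard_def]
  have hmem : I.ncard ∈ Set.ncard '' {J : Set E | M.Indep J ∧ J ⊆ S} :=
    ⟨I, ⟨hI.indep, hI.subset⟩, rfl⟩
  exact le_antisymm (csSup_le ⟨I.ncard, hmem⟩ hub) (le_csSup ⟨I.ncard, hub⟩ hmem)

lemma flat_iff_mrk {E : Type*} [Fintype E] {M : Matroid E} (hE : M.E = Set.univ) (H : Set E) :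
    M.IsFlat H ↔ ∀ e ∉ H, mrk M (insert e H) ≠ mrk M H := by
  constructor
  · intro hF e he hcon
    obtain ⟨I, hI⟩ := M.exists_isBasis H (by rw [hE]; exact subset_univ H)
    have heI : e ∉ I := fun h => he (hI.subset h)
    by_cases hind : M.Indep (insert e I)
    · obtain ⟨I', hI'⟩ := M.exists_isBasis (insert e H) (by rw [hE]; exact subset_univ _)
      obtain ⟨J, hJ, hsub⟩ := hind.subset_isBasis_of_subset (insert_subset_insert hI.subset)
        hI'.subset_ground
      have h1 : (insert e I).ncard ≤ J.ncard := Set.ncard_le_ncard hsub J.toFinite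
      have h2 : J.ncard = I'.ncard := by
        rw [Set.ncard_def, hJ.encard_eq_encard hI', ← Set.ncard_def]
      have h3 : mrk M (insert e H) = I'.ncard := mrk_eq_ncard hI'
      have h4 : mrk M H = I.ncard := mrk_eq_ncard hI
      rw [Set.ncard_insert_of_notMem heI I.toFinite] at h1
      omega
    · have heE : e ∈ M.E := by rw [hE]; trivial
      have hecl : e ∈ M.closure I := by
        rw [hI.indep.insert_indep_iff_of_notMem heI] at hind
        by_contra h
        exact hind ⟨heE, h⟩
      have hb : M.IsBasis I (insert e H) := hI.indep.isBasis_of_subset_of_subset_closure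
        (hI.subset.trans (subset_insert _ _)) (insert_subset hecl hI.subset_closure)
      exact he (hF.subset_of_isBasis_of_isBasis hI hb (mem_insert e H))
  · intro h
    refine ⟨fun I X hIH hIX => fun e heX => by_contra fun heH => ?_,
      by rw [hE]; exact subset_univ H⟩
    have hecl : e ∈ M.closure I := hIX.subset_closure heX
    have hb : M.IsBasis I (insert e H) := hIH.indep.isBasis_of_subset_of_subset_closure
      (hIH.subset.trans (subset_insert _ _)) (insert_subset hecl hIH.subset_closure)
    exact h e heH (by rw [mrk_eq_ncard hb, mrk_eq_ncard hIH])

end Aux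

/-- `C ⊆ E` is a cocircuit of the matroid `M_W` iff `C` is the support of an
elementary vector of `W`. -/
theorem stmt13 {K E : Type*} [Field K] [Fintype E] (W : Submodule K (E → K))
    (M : Matroid E) (hM : IsMatroidOf M W) (C : Set E) :
    IsCocircuitOf M C ↔ ∃ w : E → K, IsElementary W w ∧ C = Function.support w := by
  classical
  obtain ⟨hE, hr⟩ := hM
  set n := finrank K W with hn
  have key : ∀ S : Set E, mrk M S + finrank K ↥(W ⊓ LinearMap.ker (proj K S)) = n := by
    intro S; rw [hr S]; exact rank_nullity W S
  have hground : mrk M Set.univ = n := by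
    have hkey := key Set.univ
    have hker : W ⊓ LinearMap.ker (proj K (Set.univ : Set E)) = ⊥ := by
      rw [eq_bot_iff]
      rintro x ⟨-, hxk⟩
      have hx := mem_ker_proj.mp hxk
      have : x = 0 := funext fun i => hx i trivial
      simp [this]
    rw [hker, finrank_bot] at hkey
    omega
  constructor
  · rintro ⟨H, ⟨hFlat, hH1⟩, rfl⟩
    rw [hE, hground] at hH1
    have hVH : finrank K ↥(W ⊓ LinearMap.ker (proj K H)) = 1 := by
      have := key H; omega
    have hne : W ⊓ LinearMap.ker (proj K H) ≠ ⊥ := by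
      intro hb; rw [hb, finrank_bot] at hVH; omega
    obtain ⟨w, hwV, hw0⟩ := Submodule.exists_mem_ne_zero_of_ne_bot hne
    have hspan : Submodule.span K {w} = W ⊓ LinearMap.ker (proj K H) := by
      apply Submodule.eq_of_le_of_finrank_le
      · rwa [Submodule.span_le, Set.singleton_subset_iff]
      · rw [finrank_span_singleton hw0, hVH]
    have hwW : w ∈ W := hwV.1
    have hwk : ∀ i ∈ H, w i = 0 := mem_ker_proj.mp hwV.2
    -- support w = univ \ H
    have hsupp : Function.support w = Set.univ \ H := by
      apply Set.Subset.antisymm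
      · intro i hi
        exact ⟨trivial, fun hiH => hi (hwk i hiH)⟩
      · rintro e ⟨-, heH⟩
        have hne' := (flat_iff_mrk hE H).mp hFlat e heH
        have hVle : W ⊓ LinearMap.ker (proj K (insert e H)) ≤
            W ⊓ LinearMap.ker (proj K H) := by
          refine inf_le_inf_left W fun x hx => mem_ker_proj.mpr fun i hi =>
            mem_ker_proj.mp hx i (Set.mem_insert_of_mem e hi)
        have hle1 : finrank K ↥(W ⊓ LinearMap.ker (proj K (insert e H))) ≤ 1 := by
          rw [← hVH]; exact Submodule.finrank_mono hVle
        have hne1 : finrank K ↥(W ⊓ LinearMap.ker (proj K (insert e H))) ≠ 1 := by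
          have h1 := key (insert e H); have h2 := key H; omega
        have hbot : W ⊓ LinearMap.ker (proj K (insert e H)) = ⊥ :=
          Submodule.finrank_eq_zero.mp (by omega)
        by_contra hwe
        have : w ∈ W ⊓ LinearMap.ker (proj K (insert e H)) := by
          refine ⟨hwW, mem_ker_proj.mpr fun i hi => ?_⟩
          rcases Set.mem_insert_iff.mp hi with h | h
          · subst h; simpa using hwe
          · exact hwk i h
        rw [hbot, Submodule.mem_bot] at this
        exact hw0 this
    refine ⟨w, ⟨hwW, hw0, ?_⟩, by rw [hE, hsupp]⟩
    intro v hvW hv0 hss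
    have hvV : v ∈ W ⊓ LinearMap.ker (proj K H) := by
      refine ⟨hvW, mem_ker_proj.mpr fun i hi => ?_⟩
      by_contra hvi
      have : i ∈ Function.support w := hss.subset hvi
      rw [hsupp] at this
      exact this.2 hi
    rw [← hspan, Submodule.mem_span_singleton] at hvV
    obtain ⟨c, rfl⟩ := hvV
    have hc : c ≠ 0 := fun h => hv0 (by simp [h])
    rw [Function.support_const_smul_of_ne_zero c w hc] at hss
    exact hss.ne rfl
  · rintro ⟨w, ⟨hwW, hw0, helem⟩, rfl⟩
    set H : Set E := (Function.support w)ᶜ with hH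
    have hwk : ∀ i ∈ H, w i = 0 := fun i hi => Function.notMem_support.mp hi
    have hspan : W ⊓ LinearMap.ker (proj K H) = Submodule.span K {w} := by
      apply le_antisymm
      · rintro v ⟨hvW, hvk⟩
        have hsub : Function.support v ⊆ Function.support w := by
          intro i hi
          by_contra h
          exact hi (mem_ker_proj.mp hvk i h)
        by_cases hv0 : v = 0
        · simp [hv0]
        · have heq : Function.support v = Function.support w := by
            by_contra hneq
            exact helem v hvW hv0 ⟨hsub, fun h => hneq (Set.Subset.antisymm hsub h)⟩
          obtain ⟨i, hi⟩ := Function.support_nonempty_iff.mpr hw0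
          have hwi : w i ≠ 0 := hi
          set c := v i / w i with hc
          have hu : v - c • w ∈ W := sub_mem hvW (Submodule.smul_mem W c hwW)
          have hui : (v - c • w) i = 0 := by
            simp only [Pi.sub_apply, Pi.smul_apply, smul_eq_mul, hc]
            field_simp
            ring
          have husub : Function.support (v - c • w) ⊆ Function.support w := by
            intro j hj
            by_contra h
            have hwj : w j = 0 := Function.notMem_support.mp h
            have hvj : v j = 0 := by
              by_contra h'
              exact h (heq ▸ h' : j ∈ Function.support w)
            exact hj (by simp [Pi.sub_apply, hvj, hwj])
          have hss : Function.support (v - c • w) ⊂ Function.support w :=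
            ⟨husub, fun h => (h hi : (v - c • w) i ≠ 0) hui⟩
          have hu0 : v - c • w = 0 := by
            by_contra h
            exact helem _ hu h hss
          have : v = c • w := by
            rw [sub_eq_zero] at hu0; exact hu0
          rw [this]
          exact Submodule.smul_mem _ _ (Submodule.mem_span_singleton_self w)
      · rw [Submodule.span_le, Set.singleton_subset_iff]
        exact ⟨hwW, mem_ker_proj.mpr hwk⟩
    have hVH : finrank K ↥(W ⊓ LinearMap.ker (proj K H)) = 1 := by
      rw [hspan, finrank_span_singleton hw0]
    have hkeyH := key H
    refine ⟨H, ⟨?_, ?_⟩, ?_⟩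
    · rw [flat_iff_mrk hE]
      intro e he hcon
      have heS : e ∈ Function.support w := by by_contra h; exact he h
      have hbot : W ⊓ LinearMap.ker (proj K (insert e H)) = ⊥ := by
        rw [eq_bot_iff]
        rintro v ⟨hvW, hvk⟩
        rw [Submodule.mem_bot]
        by_contra hv0
        have hsub : Function.support v ⊆ Function.support w := by
          intro i hi
          by_contra h
          exact hi (mem_ker_proj.mp hvk i (Set.mem_insert_of_mem e h))
        have hve : v e = 0 := mem_ker_proj.mp hvk e (Set.mem_insert e H)
        refine helem v hvW hv0 ⟨hsub, fun h => ?_⟩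
        exact (h heS : v e ≠ 0) hve
      have h1 := key (insert e H)
      rw [hbot, finrank_bot] at h1
      omega
    · rw [hE, hground]; omega
    · rw [hE]
      simp [hH, Set.diff_eq, compl_compl]
end

section
/- Let K be a field, E a finite type, and W ⊆ W' two linear subspaces of K^E. Then the matroid M_W is a quotient of the matroid M_{W'}: every flat of M_W is a flat of M_{W'}; equivalently, rank_{M_{W'}}(B) − rank_{M_{W'}}(A) ≥ rank_{M_W}(B) − rank_{M_W}(A) for all A ⊆ B ⊆ E. -/
open Set Function Module Submodule

lemma mrk_eq_ncard_of_basis {E : Type*} [Fintype E] {M : Matroid E} {J S : Set E}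
    (hJ : M.IsBasis J S) : mrk M S = J.ncard := by
  refine IsGreatest.csSup_eq ⟨⟨J, ⟨hJ.indep, hJ.subset⟩, rfl⟩, ?_⟩
  rintro n ⟨I, ⟨hI, hIS⟩, rfl⟩
  obtain ⟨J', hJ', hIJ'⟩ := hI.subset_isBasis_of_subset hIS hJ.subset_ground
  have hcard : J'.encard = J.encard := hJ'.encard_eq_encard hJ
  calc I.ncard ≤ J'.ncard := Set.ncard_le_ncard hIJ' (Set.toFinite _)
    _ = J.ncard := by rw [Set.ncard, Set.ncard, hcard]

lemma flat_iff_rank {E : Type*} [Fintype E] {M : Matroid E} (hE : M.E = Set.univ)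
    (F : Set E) : M.IsFlat F ↔ ∀ e, e ∉ F → mrk M F < mrk M (insert e F) := by
  have hsub : ∀ S : Set E, S ⊆ M.E := by rw [hE]; exact fun S => Set.subset_univ S
  constructor
  · intro hF e he
    obtain ⟨I, hI⟩ := M.exists_isBasis F (hsub F)
    obtain ⟨J, hJ, hIJ⟩ := hI.indep.subset_isBasis_of_subset
      (hI.subset.trans (Set.subset_insert e F)) (hsub _)
    rw [mrk_eq_ncard_of_basis hI, mrk_eq_ncard_of_basis hJ]
    have hne : I ≠ J := by
      rintro rfl
      exact he (hF.subset_of_isBasis_of_isBasis hI hJ (Set.mem_insert e F))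
    exact Set.ncard_lt_ncard (hIJ.ssubset_of_ne hne) (Set.toFinite _)
  · intro h
    refine ⟨fun I X hIF hIX => ?_, hsub F⟩
    intro e heX
    by_contra heF
    have hIU := hIF.isBasis_union hIX
    have hIe : M.IsBasis I (insert e F) := hIU.isBasis_subset
      (hIF.subset.trans (Set.subset_insert _ _))
      (Set.insert_subset (Or.inr heX) Set.subset_union_left)
    have := h e heF
    rw [mrk_eq_ncard_of_basis hIF, mrk_eq_ncard_of_basis hIe] at this
    exact lt_irrefl _ this

lemma la_key {K E : Type*} [Field K] [Fintype E] (W : Submodule K (E → K)) {A B : Set E}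
    (hAB : A ⊆ B) :
    finrank K ↥(W.map (proj K B)) =
      finrank K ↥(W.map (proj K A)) +
        finrank K ↥((W ⊓ LinearMap.ker (proj K A)).map (proj K B)) := by
  classical
  set φ : (↥B → K) →ₗ[K] (↥A → K) := LinearMap.funLeft K K (Set.inclusion hAB) with hφ
  have hcomp : proj K A = φ.comp (proj K B) := by
    rw [proj, proj, hφ, ← LinearMap.funLeft_comp]
    rfl
  set V := W.map (proj K B) with hV
  have h1 : finrank K ↥(LinearMap.range (φ.domRestrict V)) +
      finrank K ↥(LinearMap.ker (φ.domRestrict V)) = finrank K ↥V :=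
    LinearMap.finrank_range_add_finrank_ker _
  have hrange : LinearMap.range (φ.domRestrict V) = W.map (proj K A) := by
    rw [LinearMap.range_domRestrict, hV, ← Submodule.map_comp, ← hcomp]
  have hker : LinearMap.ker (φ.domRestrict V) = Submodule.comap V.subtype
      (V ⊓ LinearMap.ker φ) := by
    rw [LinearMap.ker_domRestrict, Submodule.comap_inf, Submodule.comap_subtype_self,
      top_inf_eq]
  have hinf : V ⊓ LinearMap.ker φ = (W ⊓ LinearMap.ker (proj K A)).map (proj K B) := by
    ext y
    simp only [Submodule.mem_inf, Submodule.mem_map, LinearMap.mem_ker, hV]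
    constructor
    · rintro ⟨⟨x, hxW, rfl⟩, hy0⟩
      refine ⟨x, ⟨hxW, ?_⟩, rfl⟩
      rw [hcomp]
      exact hy0
    · rintro ⟨x, ⟨hxW, hx0⟩, rfl⟩
      refine ⟨⟨x, hxW, rfl⟩, ?_⟩
      rw [hcomp] at hx0
      exact hx0
  have hkerrank : finrank K ↥(LinearMap.ker (φ.domRestrict V)) =
      finrank K ↥((W ⊓ LinearMap.ker (proj K A)).map (proj K B)) := by
    rw [hker, ← hinf]
    exact (Submodule.comapSubtypeEquivOfLe inf_le_left).finrank_eq
  rw [← h1, hrange, hkerrank]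

/-- if `W ⊆ W'` then `M_W` is a quotient of `M_{W'}`: every flat of `M_W` is a
flat of `M_{W'}`, and `rank_{M_{W'}}(B) − rank_{M_{W'}}(A) ≥ rank_{M_W}(B) − rank_{M_W}(A)`
for all `A ⊆ B ⊆ E`. -/
theorem stmt16 {K E : Type*} [Field K] [Fintype E] (W W' : Submodule K (E → K))
    (hWW' : W ≤ W') (M M' : Matroid E) (hM : IsMatroidOf M W) (hM' : IsMatroidOf M' W') :
    (∀ F : Set E, M.IsFlat F → M'.IsFlat F) ∧
    (∀ A B : Set E, A ⊆ B → mrk M B - mrk M A ≤ mrk M' B - mrk M' A) := by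
  have hd : ∀ (A B : Set E), A ⊆ B →
      mrk M B = mrk M A + finrank K ↥((W ⊓ LinearMap.ker (proj K A)).map (proj K B)) := by
    intro A B h
    rw [hM.2, hM.2, la_key W h]
  have hd' : ∀ (A B : Set E), A ⊆ B →
      mrk M' B = mrk M' A + finrank K ↥((W' ⊓ LinearMap.ker (proj K A)).map (proj K B)) := by
    intro A B h
    rw [hM'.2, hM'.2, la_key W' h]
  have hmono : ∀ (A B : Set E),
      finrank K ↥((W ⊓ LinearMap.ker (proj K A)).map (proj K B)) ≤
        finrank K ↥((W' ⊓ LinearMap.ker (proj K A)).map (proj K B)) := by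
    intro A B
    exact Submodule.finrank_mono
      (Submodule.map_mono (inf_le_inf_right _ hWW'))
  constructor
  · intro F hF
    rw [flat_iff_rank hM'.1]
    have h1 := (flat_iff_rank hM.1 F).mp hF
    intro e he
    have e1 := hd F (insert e F) (Set.subset_insert e F)
    have e2 := hd' F (insert e F) (Set.subset_insert e F)
    have e3 := hmono F (insert e F)
    have e4 := h1 e he
    omega
  · intro A B hAB
    have e1 := hd A B hAB
    have e2 := hd' A B hAB
    have e3 := hmono A B
    omega
end

section
/- Let E be a finite type and 𝒰 a collection of subsets of E. Then there exists a matroid M on the ground set E such that 𝒰 is exactly the collection of all (possibly empty) unions of cocircuits of M if and only if the following three conditions hold: (1) ∅ ∈ 𝒰; (2) X ∪ Y ∈ 𝒰 for all X, Y ∈ 𝒰; (3) for every nonempty X ∈ 𝒰, the sets X ∖ Y, where Y ranges over the maximal elements of {Y ∈ 𝒰 : Y ⊊ X} (ordered by inclusion), are pairwise disjoint and their union is X. -/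
open Set Function Module Submodule

/-- `Y` is a maximal element of `{Y ∈ 𝒰 : Y ⊊ X}` (ordered by inclusion). -/
def MaxBelow {E : Type*} (𝒰 : Set (Set E)) (X Y : Set E) : Prop :=
  Y ∈ 𝒰 ∧ Y ⊂ X ∧ ∀ Z ∈ 𝒰, Z ⊂ X → Y ⊆ Z → Y = Z

section General
variable {E : Type*} [Fintype E] {M : Matroid E} {S F G H I J X : Set E} {x z : E}

lemma mrk_eq_of_basis (hI : M.IsBasis I S) : mrk M S = I.ncard := by
  have hgr : IsGreatest (Set.ncard '' {I : Set E | M.Indep I ∧ I ⊆ S}) I.ncard := by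
    constructor
    · exact ⟨I, ⟨hI.indep, hI.subset⟩, rfl⟩
    · rintro n ⟨J, ⟨hJ, hJS⟩, rfl⟩
      obtain ⟨J', hJ', hJJ'⟩ := hJ.subset_isBasis_of_subset hJS hI.subset_ground
      have h1 : J.ncard ≤ J'.ncard := Set.ncard_le_ncard hJJ' J'.toFinite
      have h2 : J'.ncard = I.ncard := by
        have := hJ'.encard_eq_encard hI
        rw [Set.ncard, Set.ncard, this]
      omega
  exact hgr.csSup_eq

lemma flat_sInter_univ (hME : M.E = univ) (𝒮 : Set (Set E)) (h : ∀ F ∈ 𝒮, M.IsFlat F) :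
    M.IsFlat (⋂₀ 𝒮) := by
  rcases eq_empty_or_nonempty 𝒮 with rfl | hne
  · simpa [← hME] using M.ground_isFlat
  · have : Nonempty 𝒮 := hne.to_subtype
    rw [sInter_eq_iInter]
    exact Matroid.IsFlat.iInter (fun F ↦ h F.1 F.2)

lemma closure_flat' (hME : M.E = univ) (S : Set E) : M.IsFlat (M.closure S) := by
  rw [Matroid.closure_def]
  exact flat_sInter_univ hME _ (fun F hF ↦ hF.1)

lemma eq_univ_of_flat_mrk (hME : M.E = univ) (hF : M.IsFlat F) (h : mrk M F = mrk M M.E) :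
    F = univ := by
  obtain ⟨I, hI⟩ := M.exists_isBasis F hF.subset_ground
  obtain ⟨B, hB, hIB⟩ := hI.indep.subset_isBasis_of_subset (hI.indep.subset_ground.trans rfl.subset)
  have hBbase : M.IsBase B := Matroid.isBasis_ground_iff.mp hB
  have h1 : mrk M F = I.ncard := mrk_eq_of_basis hI
  have h2 : mrk M M.E = B.ncard := mrk_eq_of_basis hB
  have hIBeq : I = B := Set.eq_of_subset_of_ncard_le hIB (by omega) B.toFinite
  have hcl : M.closure I = M.E := hIBeq ▸ hBbase.closure_eq
  have h3 : M.E ⊆ M.closure F := hcl ▸ M.closure_subset_closure hI.subset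
  rw [hF.closure] at h3
  exact eq_univ_of_univ_subset (hME ▸ h3)

lemma hyperplane_iff_maximal (hME : M.E = univ) :
    IsHyperplaneOf M H ↔ M.IsFlat H ∧ H ≠ univ ∧ ∀ F, M.IsFlat F → H ⊂ F → F = univ := by
  constructor
  · rintro ⟨hH, hrk⟩
    refine ⟨hH, fun h ↦ by rw [h, ← hME] at hrk; omega, fun F hF hHF ↦ ?_⟩
    obtain ⟨x, hxF, hxH⟩ := exists_of_ssubset hHF
    obtain ⟨I, hI⟩ := M.exists_isBasis H hH.subset_ground
    have hxcl : x ∉ M.closure I := by rw [hI.closure_eq_closure, hH.closure]; exact hxH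
    have hxI : M.Indep (insert x I) := by
      rw [hI.indep.insert_indep_iff_of_notMem (fun h ↦ hxH (hI.subset h))]
      exact ⟨hME ▸ mem_univ x, hxcl⟩
    obtain ⟨J, hJ, hIJ⟩ := hxI.subset_isBasis_of_subset
      (insert_subset hxF (hHF.subset.trans' hI.subset)) hF.subset_ground
    have h1 : mrk M F = J.ncard := mrk_eq_of_basis hJ
    have h2 : mrk M H = I.ncard := mrk_eq_of_basis hI
    have h3 : (insert x I).ncard ≤ J.ncard := Set.ncard_le_ncard hIJ J.toFinite
    have h4 : (insert x I).ncard = I.ncard + 1 :=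
      Set.ncard_insert_of_notMem (fun h ↦ hxH (hI.subset h)) I.toFinite
    have h5 : mrk M F ≤ mrk M M.E := by
      obtain ⟨B, hB, hJB⟩ := hJ.indep.subset_isBasis_of_subset
        (hJ.indep.subset_ground.trans rfl.subset)
      rw [h1, mrk_eq_of_basis hB]
      exact Set.ncard_le_ncard hJB B.toFinite
    exact eq_univ_of_flat_mrk hME hF (by omega)
  · rintro ⟨hH, hne, hmax⟩
    refine ⟨hH, ?_⟩
    obtain ⟨x, hx⟩ : ∃ x, x ∉ H := by
      by_contra h; push_neg at h; exact hne (eq_univ_of_forall h)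
    obtain ⟨I, hI⟩ := M.exists_isBasis H hH.subset_ground
    have hxcl : x ∉ M.closure I := by rw [hI.closure_eq_closure, hH.closure]; exact hx
    have hxI : M.Indep (insert x I) := by
      rw [hI.indep.insert_indep_iff_of_notMem (fun h ↦ hx (hI.subset h))]
      exact ⟨hME ▸ mem_univ x, hxcl⟩
    have hclins : M.closure (insert x I) = univ := by
      have h1 : M.closure (insert x H) = univ := by
        apply hmax _ (closure_flat' hME _)
        have hsub : H ⊆ M.closure (insert x H) :=
          (subset_insert _ _).trans (M.subset_closure (insert x H) (hME ▸ subset_univ _))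
        exact ssubset_of_subset_of_ne hsub fun h ↦
          hx (h ▸ M.mem_closure_of_mem (mem_insert _ _) (hME ▸ subset_univ _))
      calc M.closure (insert x I) = M.closure (insert x (M.closure I)) := by
            rw [Matroid.closure_insert_closure_eq_closure_insert]
        _ = univ := by rw [hI.closure_eq_closure, hH.closure, h1]
    have hbase : M.IsBase (insert x I) :=
      hxI.isBase_of_ground_subset_closure (by rw [hclins, hME])
    have h2 : mrk M M.E = (insert x I).ncard := by
      rw [hME]; exact mrk_eq_of_basis (by rw [← hME]; exact Matroid.isBasis_ground_iff.mpr hbase)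
    rw [mrk_eq_of_basis hI, h2,
      Set.ncard_insert_of_notMem (fun h ↦ hx (hI.subset h)) I.toFinite]

lemma flat_closure_insert_cov (hME : M.E = univ) (hF : M.IsFlat F) (hz : z ∉ F) :
    F ⊂ M.closure (insert z F) ∧
      ∀ G, M.IsFlat G → F ⊂ G → G ⊆ M.closure (insert z F) → G = M.closure (insert z F) := by
  have hzu : (insert z F : Set E) ⊆ M.E := hME ▸ subset_univ _
  have hFsub : F ⊆ M.closure (insert z F) :=
    (subset_insert _ _).trans (M.subset_closure _ hzu)
  have hzmem : z ∈ M.closure (insert z F) := M.mem_closure_of_mem (mem_insert _ _) hzu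
  have hss : F ⊂ M.closure (insert z F) :=
    ssubset_of_subset_of_ne hFsub (fun h ↦ hz (h ▸ hzmem))
  refine ⟨hss, fun G hG hFG hGsub ↦ ?_⟩
  obtain ⟨w, hwG, hwF⟩ := exists_of_ssubset hFG
  have hw : w ∈ M.closure (insert z F) \ M.closure F := by
    rw [hF.closure]; exact ⟨hGsub hwG, hwF⟩
  have hz' : z ∈ M.closure (insert w F) := (Matroid.closure_exchange hw).1
  have : M.closure (insert z F) ⊆ G := by
    have h1 : insert z F ⊆ M.closure (insert w F) :=
      insert_subset hz' ((subset_insert _ _).trans (M.subset_closure _ (hME ▸ subset_univ _)))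
    have h2 : M.closure (insert w F) ⊆ G := by
      have : insert w F ⊆ G := insert_subset hwG hFG.subset
      calc M.closure (insert w F) ⊆ M.closure G := M.closure_subset_closure this
        _ = G := hG.closure
    exact (M.closure_subset_closure_of_subset_closure h1).trans h2
  exact hGsub.antisymm this

lemma exists_hyperplane_sep (hME : M.E = univ) (hF : M.IsFlat F) (hx : x ∉ F) :
    ∃ H, IsHyperplaneOf M H ∧ F ⊆ H ∧ x ∉ H := by
  set 𝒮 := {G : Set E | M.IsFlat G ∧ F ⊆ G ∧ x ∉ G} with h𝒮
  obtain ⟨H, hH𝒮, hHmax⟩ := Set.Finite.exists_maximalFor id 𝒮 (Set.toFinite _)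
    ⟨F, hF, rfl.subset, hx⟩
  obtain ⟨hHflat, hFH, hxH⟩ := hH𝒮
  refine ⟨H, (hyperplane_iff_maximal hME).mpr ⟨hHflat, ?_, fun G hG hHG ↦ ?_⟩, hFH, hxH⟩
  · rintro rfl; exact hxH (mem_univ x)
  · -- any flat strictly above H is univ
    obtain ⟨y, hyG, hyH⟩ := exists_of_ssubset hHG
    have key : ∀ w, w ∉ H → x ∈ M.closure (insert w H) := by
      intro w hwH
      by_contra hxw
      have hmem : M.closure (insert w H) ∈ 𝒮 :=
        ⟨closure_flat' hME _, hFH.trans ((subset_insert _ _).trans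
          (M.subset_closure _ (hME ▸ subset_univ _))), hxw⟩
      have hsub : H ⊆ M.closure (insert w H) :=
        (subset_insert _ _).trans (M.subset_closure _ (hME ▸ subset_univ _))
      have heq : H = M.closure (insert w H) := hsub.antisymm (hHmax hmem hsub)
      exact hwH (heq ▸ M.mem_closure_of_mem (mem_insert _ _) (hME ▸ subset_univ _))
    have hxG : x ∈ G := by
      have := key y hyH
      have hsub : M.closure (insert y H) ⊆ G := by
        calc M.closure (insert y H) ⊆ M.closure G :=
              M.closure_subset_closure (insert_subset hyG hHG.subset)
          _ = G := hG.closure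
      exact hsub this
    refine eq_univ_of_forall fun w ↦ ?_
    by_cases hwH : w ∈ H
    · exact hHG.subset hwH
    · have hxw := key w hwH
      have hw : w ∈ M.closure (insert x H) := by
        have hxcl : x ∉ M.closure H := by rw [hHflat.closure]; exact hxH
        exact (Matroid.closure_exchange ⟨hxw, hxcl⟩).1
      have hsub : M.closure (insert x H) ⊆ G := by
        calc M.closure (insert x H) ⊆ M.closure G :=
              M.closure_subset_closure (insert_subset hxG hHG.subset)
          _ = G := hG.closure
      exact hsub hw

lemma sUnion_cocircuits_iff (hME : M.E = univ) (X : Set E) :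
    (∃ 𝒞 : Set (Set E), (∀ C ∈ 𝒞, IsCocircuitOf M C) ∧ X = ⋃₀ 𝒞) ↔ M.IsFlat (univ \ X) := by
  constructor
  · rintro ⟨𝒞, h𝒞, rfl⟩
    have : univ \ ⋃₀ 𝒞 = ⋂₀ {H | ∃ C ∈ 𝒞, H = univ \ C} := by
      ext w
      simp only [mem_diff, mem_univ, true_and, mem_sInter, mem_setOf_eq, mem_sUnion]
      constructor
      · rintro hw H ⟨C, hC, rfl⟩; exact ⟨mem_univ w, fun hwC ↦ hw ⟨C, hC, hwC⟩⟩
      · rintro h ⟨C, hC, hwC⟩; exact (h _ ⟨C, hC, rfl⟩).2 hwC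
    rw [this]
    refine flat_sInter_univ hME _ ?_
    rintro H ⟨C, hC, rfl⟩
    obtain ⟨H', ⟨hH', _⟩, rfl⟩ := h𝒞 C hC
    have : univ \ (M.E \ H') = H' := by
      rw [hME, diff_diff_cancel_left (hME ▸ hH'.subset_ground)]
    rw [this]; exact hH'
  · intro hflat
    refine ⟨{C | IsCocircuitOf M C ∧ C ⊆ X}, fun C hC ↦ hC.1, ?_⟩
    apply subset_antisymm
    · intro w hwX
      have hw : w ∉ univ \ X := fun h ↦ h.2 hwX
      obtain ⟨H, hH, hsub, hwH⟩ := exists_hyperplane_sep hME hflat (by simpa using hwX)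
      refine mem_sUnion.mpr ⟨univ \ H, ⟨⟨H, hH, by rw [hME]⟩, ?_⟩, ⟨mem_univ w, hwH⟩⟩
      intro v hv
      by_contra hvX
      exact hv.2 (hsub ⟨mem_univ v, hvX⟩)
    · intro w hw
      obtain ⟨C, ⟨_, hCX⟩, hwC⟩ := hw
      exact hCX hwC

end General

namespace Con
variable {E : Type*} [Fintype E] (𝒰 : Set (Set E))

def fam : Set (Set E) := {F | Fᶜ ∈ 𝒰}

def acl (S : Set E) : Set E := ⋂₀ {F ∈ fam 𝒰 | S ⊆ F}

def AInd (I : Set E) : Prop := ∀ x ∈ I, x ∉ acl 𝒰 (I \ {x})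

variable {𝒰} {S T F G I J : Set E} {x y z a b : E}

lemma subset_acl : S ⊆ acl 𝒰 S := fun x hx ↦ mem_sInter.mpr fun _ hF ↦ hF.2 hx

lemma acl_mono (h : S ⊆ T) : acl 𝒰 S ⊆ acl 𝒰 T :=
  sInter_subset_sInter fun F hF ↦ ⟨hF.1, h.trans hF.2⟩

lemma acl_le (hF : F ∈ fam 𝒰) (h : S ⊆ F) : acl 𝒰 S ⊆ F := sInter_subset_of_mem ⟨hF, h⟩

lemma acl_of_mem (hF : F ∈ fam 𝒰) : acl 𝒰 F = F :=
  (acl_le hF rfl.subset).antisymm subset_acl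

section axioms
variable (h1 : ∅ ∈ 𝒰) (h2 : ∀ X ∈ 𝒰, ∀ Y ∈ 𝒰, X ∪ Y ∈ 𝒰)

include h1 h2

lemma univ_mem_fam : univ ∈ fam 𝒰 := by simp [fam, h1]

lemma inter_mem_fam (hF : F ∈ fam 𝒰) (hG : G ∈ fam 𝒰) : F ∩ G ∈ fam 𝒰 := by
  have := h2 _ hF _ hG
  simpa [fam, compl_inter] using this

lemma acl_mem_fam (S : Set E) : acl 𝒰 S ∈ fam 𝒰 := by
  have key : ∀ 𝒢 : Finset (Set E), (∀ F ∈ 𝒢, F ∈ fam 𝒰) →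
      univ ∩ ⋂₀ (𝒢 : Set (Set E)) ∈ fam 𝒰 := by
    classical
    intro 𝒢
    induction 𝒢 using Finset.induction_on with
    | empty => intro _; simpa using univ_mem_fam h1 h2
    | insert A s hni ih =>
      intro h
      have : univ ∩ ⋂₀ (↑(insert A s) : Set (Set E)) =
          A ∩ (univ ∩ ⋂₀ (s : Set (Set E))) := by
        simp only [Finset.coe_insert, sInter_insert]
        rw [univ_inter, univ_inter]
      rw [this]
      exact inter_mem_fam h1 h2 (h A (Finset.mem_insert_self _ _))
        (ih fun F hF ↦ h F (Finset.mem_insert_of_mem hF))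
  have hfin : {F ∈ fam 𝒰 | S ⊆ F}.Finite := Set.toFinite _
  have : acl 𝒰 S = univ ∩ ⋂₀ (hfin.toFinset : Set (Set E)) := by
    rw [Set.Finite.coe_toFinset]; simp [acl]
  rw [this]
  exact key _ (fun F hF ↦ ((hfin.mem_toFinset).mp hF).1)

lemma acl_acl (S : Set E) : acl 𝒰 (acl 𝒰 S) = acl 𝒰 S :=
  acl_of_mem (acl_mem_fam h1 h2 S)

lemma acl_subset_acl (h : S ⊆ acl 𝒰 T) : acl 𝒰 S ⊆ acl 𝒰 T :=
  acl_le (acl_mem_fam h1 h2 T) h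

lemma acl_insert_acl (S : Set E) (b : E) :
    acl 𝒰 (insert b (acl 𝒰 S)) = acl 𝒰 (insert b S) := by
  apply subset_antisymm
  · exact acl_subset_acl h1 h2 (insert_subset (subset_acl (mem_insert _ _))
      (acl_mono (subset_insert _ _)))
  · exact acl_mono (insert_subset_insert subset_acl)

end axioms

/-- `G` is a cover of `F` in the lattice `fam 𝒰`. -/
def Cov (𝒰 : Set (Set E)) (F G : Set E) : Prop :=
  G ∈ fam 𝒰 ∧ F ⊂ G ∧ ∀ W ∈ fam 𝒰, F ⊂ W → W ⊆ G → W = G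

lemma cov_iff_maxBelow : Cov 𝒰 F G ↔ MaxBelow 𝒰 Fᶜ Gᶜ := by
  unfold Cov MaxBelow
  constructor
  · rintro ⟨hG, hFG, hmin⟩
    refine ⟨hG, compl_lt_compl_iff_lt.mpr hFG, fun Z hZ hZF hGZ ↦ ?_⟩
    have := hmin Zᶜ (by simpa [fam] using hZ)
      (by simpa using compl_lt_compl_iff_lt.mpr hZF) (compl_subset_comm.mp hGZ)
    rw [← this, compl_compl]
  · rintro ⟨hG, hFG, hmax⟩
    refine ⟨by simpa [fam] using hG, by simpa using compl_lt_compl_iff_lt.mpr hFG,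
      fun W hW hFW hWG ↦ ?_⟩
    have := hmax Wᶜ (by simpa [fam] using hW)
      (compl_lt_compl_iff_lt.mpr hFW) (compl_subset_compl.mpr hWG)
    rw [← compl_compl W, ← this, compl_compl]

section part
variable (h3 : ∀ X ∈ 𝒰, X.Nonempty →
      (∀ Y₁ Y₂ : Set E, MaxBelow 𝒰 X Y₁ → MaxBelow 𝒰 X Y₂ → Y₁ ≠ Y₂ →
        (X \ Y₁) ∩ (X \ Y₂) = ∅) ∧
      (⋃ Y ∈ {Y : Set E | MaxBelow 𝒰 X Y}, X \ Y) = X)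

include h3

lemma exists_cov (hF : F ∈ fam 𝒰) (hz : z ∉ F) : ∃ G, Cov 𝒰 F G ∧ z ∈ G := by
  have hXne : (Fᶜ : Set E).Nonempty := ⟨z, hz⟩
  obtain ⟨-, hun⟩ := h3 Fᶜ hF hXne
  have hzX : z ∈ (⋃ Y ∈ {Y : Set E | MaxBelow 𝒰 Fᶜ Y}, Fᶜ \ Y) := by rw [hun]; exact hz
  simp only [mem_iUnion, mem_setOf_eq, exists_prop] at hzX
  obtain ⟨Y, hY, hzY⟩ := hzX
  refine ⟨Yᶜ, ?_, by simpa using hzY.2⟩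
  rw [cov_iff_maxBelow, compl_compl]
  exact hY
end part

section all
variable (h1 : ∅ ∈ 𝒰) (h2 : ∀ X ∈ 𝒰, ∀ Y ∈ 𝒰, X ∪ Y ∈ 𝒰)
  (h3 : ∀ X ∈ 𝒰, X.Nonempty →
      (∀ Y₁ Y₂ : Set E, MaxBelow 𝒰 X Y₁ → MaxBelow 𝒰 X Y₂ → Y₁ ≠ Y₂ →
        (X \ Y₁) ∩ (X \ Y₂) = ∅) ∧
      (⋃ Y ∈ {Y : Set E | MaxBelow 𝒰 X Y}, X \ Y) = X)
include h1 h2 h3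

lemma cov_acl_insert (hF : F ∈ fam 𝒰) (hz : z ∉ F) : Cov 𝒰 F (acl 𝒰 (insert z F)) := by
  obtain ⟨G, hcov, hzG⟩ := exists_cov h3 hF hz
  have hsub : acl 𝒰 (insert z F) ⊆ G := acl_le hcov.1 (insert_subset hzG hcov.2.1.subset)
  have hss : F ⊂ acl 𝒰 (insert z F) :=
    ssubset_of_subset_of_ne ((subset_insert _ _).trans subset_acl)
      (fun h ↦ hz (h ▸ subset_acl (mem_insert _ _)))
  have := hcov.2.2 _ (acl_mem_fam h1 h2 _) hss hsub
  rw [this]; exact hcov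

lemma cov_eq_acl_insert (hF : F ∈ fam 𝒰) (hcov : Cov 𝒰 F G) (hz : z ∈ G \ F) :
    G = acl 𝒰 (insert z F) := by
  have hsub : acl 𝒰 (insert z F) ⊆ G := acl_le hcov.1 (insert_subset hz.1 hcov.2.1.subset)
  have hss : F ⊂ acl 𝒰 (insert z F) :=
    ssubset_of_subset_of_ne ((subset_insert _ _).trans subset_acl)
      (fun h ↦ hz.2 (h ▸ subset_acl (mem_insert _ _)))
  exact (hcov.2.2 _ (acl_mem_fam h1 h2 _) hss hsub).symm

lemma acl_exchange (ha : a ∈ acl 𝒰 (insert b S)) (ha' : a ∉ acl 𝒰 S) :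
    b ∈ acl 𝒰 (insert a S) := by
  set F := acl 𝒰 S with hFdef
  have hF : F ∈ fam 𝒰 := acl_mem_fam h1 h2 S
  have hb : b ∉ F := by
    intro hbF
    apply ha'
    have : insert b S ⊆ F := insert_subset hbF subset_acl
    exact acl_le hF this ha
  have hclb : acl 𝒰 (insert b S) = acl 𝒰 (insert b F) := (acl_insert_acl h1 h2 S b).symm
  have hcovb : Cov 𝒰 F (acl 𝒰 (insert b F)) := cov_acl_insert h1 h2 h3 hF hb
  have haG : a ∈ acl 𝒰 (insert b F) \ F := ⟨hclb ▸ ha, ha'⟩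
  have := cov_eq_acl_insert h1 h2 h3 hF hcovb haG
  have hbmem : b ∈ acl 𝒰 (insert a F) := by
    rw [← this]
    exact subset_acl (mem_insert _ _)
  rwa [acl_insert_acl h1 h2 S a] at hbmem


lemma aind_empty : AInd 𝒰 (∅ : Set E) := fun x hx ↦ absurd hx (notMem_empty x)

omit h1 h2 h3 in
lemma aind_subset (hI : AInd 𝒰 I) (hJI : J ⊆ I) : AInd 𝒰 J := by
  intro x hxJ hx
  exact hI x (hJI hxJ) (acl_mono (diff_subset_diff_left hJI) hx)

lemma aind_insert (hI : AInd 𝒰 I) (hx : x ∉ acl 𝒰 I) : AInd 𝒰 (insert x I) := by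
  have hxI : x ∉ I := fun h ↦ hx (subset_acl h)
  intro y hy hycl
  rcases eq_or_ne y x with rfl | hne
  · apply hx
    have : insert y I \ {y} = I := by
      rw [insert_diff_of_mem _ (mem_singleton y), diff_singleton_eq_self hxI]
    rwa [this] at hycl
  · have hyI : y ∈ I := (mem_insert_iff.mp hy).resolve_left hne
    have hrw : insert x I \ {y} = insert x (I \ {y}) := by
      rw [insert_diff_of_notMem _ (by simpa using hne.symm)]
    rw [hrw] at hycl
    have hyI' : y ∉ acl 𝒰 (I \ {y}) := hI y hyI
    have hxmem : x ∈ acl 𝒰 (insert y (I \ {y})) := acl_exchange h1 h2 h3 hycl hyI'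
    have : insert y (I \ {y}) = I := insert_diff_singleton.trans (insert_eq_of_mem hyI)
    rw [this] at hxmem
    exact hx hxmem

lemma mem_acl_of_not_aind (hI : AInd 𝒰 I) (hx : x ∉ I) (h : ¬ AInd 𝒰 (insert x I)) :
    x ∈ acl 𝒰 I := by
  by_contra hcl
  exact h (aind_insert h1 h2 h3 hI hcl)

lemma aind_card_le : ∀ n : ℕ, ∀ I J : Set E, (I \ J).ncard ≤ n →
    AInd 𝒰 I → AInd 𝒰 J → J ⊆ acl 𝒰 I → J.ncard ≤ I.ncard := by
  intro n
  induction n with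
  | zero =>
    intro I J hn hI hJ hsub
    have hIJ : I ⊆ J := by
      rw [← diff_eq_empty]
      exact (Set.ncard_eq_zero (Set.toFinite _)).mp (le_antisymm hn (Nat.zero_le _))
    have : J = I := by
      apply Subset.antisymm _ hIJ
      intro y hyJ
      by_contra hyI
      apply hJ y hyJ
      have hIsub : I ⊆ J \ {y} := subset_diff_singleton hIJ hyI
      exact acl_mono hIsub (hsub hyJ)
    rw [this]
  | succ n ih =>
    intro I J hn hI hJ hsub
    rcases Set.eq_empty_or_nonempty (I \ J) with hIJ | hne
    · exact ih I J (by rw [hIJ]; simp) hI hJ hsub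
    · obtain ⟨x, hx⟩ := hne
      rw [mem_diff] at hx
      obtain ⟨hxI, hxJ⟩ := hx
      set I₀ := I \ {x} with hI₀def
      have hI₀ : AInd 𝒰 I₀ := aind_subset hI diff_subset
      have hI₀card : (I \ J).ncard = (I₀ \ J).ncard + 1 := by
        have : I₀ \ J = (I \ J) \ {x} := by
          rw [hI₀def, diff_diff_comm]
        rw [this, Set.ncard_diff_singleton_add_one ((mem_diff x).mpr ⟨hxI, hxJ⟩) (Set.toFinite _)]
      by_cases hJ0 : J ⊆ acl 𝒰 I₀
      · have := ih I₀ J (by omega) hI₀ hJ hJ0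
        have hle : I₀.ncard ≤ I.ncard := Set.ncard_le_ncard diff_subset (Set.toFinite _)
        omega
      · rw [Set.not_subset] at hJ0
        obtain ⟨y, hyJ, hy0⟩ := hJ0
        have hyx : y ≠ x := fun h ↦ hxJ (h ▸ hyJ)
        have hyI : y ∉ I₀ := fun h ↦ hy0 (subset_acl h)
        have hIeq : I = insert x I₀ := by
          rw [hI₀def, insert_diff_singleton, insert_eq_of_mem hxI]
        have hycl : y ∈ acl 𝒰 (insert x I₀) := hIeq ▸ hsub hyJ
        have hxcl : x ∈ acl 𝒰 (insert y I₀) := acl_exchange h1 h2 h3 hycl hy0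
        set I' := insert y I₀ with hI'def
        have hI' : AInd 𝒰 I' := aind_insert h1 h2 h3 hI₀ hy0
        have hJI' : J ⊆ acl 𝒰 I' := by
          have hIsub : I ⊆ acl 𝒰 I' := by
            rw [hIeq]
            exact insert_subset hxcl ((subset_insert _ _).trans subset_acl)
          exact hsub.trans (acl_subset_acl h1 h2 hIsub)
        have hcard' : (I' \ J).ncard ≤ n := by
          have : I' \ J = I₀ \ J := by
            rw [hI'def, insert_diff_of_mem _ hyJ]
          rw [this]; omega
        have := ih I' J hcard' hI' hJ hJI'
        have hI'card : I'.ncard = I.ncard := by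
          rw [hI'def, Set.ncard_insert_of_notMem hyI (Set.toFinite _), hIeq,
            Set.ncard_insert_of_notMem (by simp [hI₀def]) (Set.toFinite _)]
        omega

lemma aind_aug (hI : AInd 𝒰 I) (hJ : AInd 𝒰 J) (hcard : I.ncard < J.ncard) :
    ∃ e ∈ J, e ∉ I ∧ AInd 𝒰 (insert e I) := by
  by_contra h
  push_neg at h
  have hsub : J ⊆ acl 𝒰 I := by
    intro e heJ
    by_cases heI : e ∈ I
    · exact subset_acl heI
    · exact mem_acl_of_not_aind h1 h2 h3 hI heI (h e heJ heI)
  have := aind_card_le h1 h2 h3 (I \ J).ncard I J le_rfl hI hJ hsub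
  omega


noncomputable def mat (h1 : ∅ ∈ 𝒰) (h2 : ∀ X ∈ 𝒰, ∀ Y ∈ 𝒰, X ∪ Y ∈ 𝒰)
    (h3 : ∀ X ∈ 𝒰, X.Nonempty →
      (∀ Y₁ Y₂ : Set E, MaxBelow 𝒰 X Y₁ → MaxBelow 𝒰 X Y₂ → Y₁ ≠ Y₂ →
        (X \ Y₁) ∩ (X \ Y₂) = ∅) ∧
      (⋃ Y ∈ {Y : Set E | MaxBelow 𝒰 X Y}, X \ Y) = X) : Matroid E :=
  (IndepMatroid.ofFinite (Set.finite_univ) (AInd 𝒰) (aind_empty h1 h2 h3)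
    (fun _ _ hJ hIJ ↦ aind_subset hJ hIJ)
    (fun _ _ hI hJ hcard ↦ aind_aug h1 h2 h3 hI hJ hcard)
    (fun I _ ↦ subset_univ I)).matroid

lemma mat_E : (mat h1 h2 h3).E = univ := rfl

lemma mat_indep : (mat h1 h2 h3).Indep I ↔ AInd 𝒰 I := by
  simp [mat, IndepMatroid.ofFinite]

lemma mat_closure_indep (hI : AInd 𝒰 I) : (mat h1 h2 h3).closure I = acl 𝒰 I := by
  set M := mat h1 h2 h3 with hM
  have hMI : M.Indep I := (mat_indep h1 h2 h3).mpr hI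
  apply subset_antisymm
  · intro x hx
    rw [hMI.mem_closure_iff'] at hx
    by_cases hxI : x ∈ I
    · exact subset_acl hxI
    · refine mem_acl_of_not_aind h1 h2 h3 hI hxI (fun hins ↦ ?_)
      exact hxI (hx.2 ((mat_indep h1 h2 h3).mpr hins))
  · intro x hx
    rw [hMI.mem_closure_iff']
    refine ⟨mem_univ x, fun hins ↦ ?_⟩
    by_contra hxI
    have hins' : AInd 𝒰 (insert x I) := (mat_indep h1 h2 h3).mp hins
    have : x ∉ acl 𝒰 (insert x I \ {x}) := hins' x (mem_insert _ _)
    rw [insert_diff_of_mem _ (mem_singleton x), diff_singleton_eq_self hxI] at this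
    exact this hx

lemma mat_closure (S : Set E) : (mat h1 h2 h3).closure S = acl 𝒰 S := by
  set M := mat h1 h2 h3 with hM
  obtain ⟨I, hI⟩ := M.exists_isBasis S (subset_univ S)
  have hIind : AInd 𝒰 I := (mat_indep h1 h2 h3).mp hI.indep
  have h₁ : M.closure S = acl 𝒰 I := by
    rw [← hI.closure_eq_closure]
    exact mat_closure_indep h1 h2 h3 hIind
  have hSacl : S ⊆ acl 𝒰 I := by
    intro y hyS
    by_cases hyI : y ∈ I
    · exact subset_acl hyI
    · have hdep : M.Dep (insert y I) := hI.insert_dep ⟨hyS, hyI⟩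
      have : ¬ AInd 𝒰 (insert y I) := fun h ↦ hdep.not_indep ((mat_indep h1 h2 h3).mpr h)
      exact mem_acl_of_not_aind h1 h2 h3 hIind hyI this
  rw [h₁]
  exact (acl_mono hI.subset).antisymm (acl_subset_acl h1 h2 hSacl)

end all
end Con

namespace Con
variable {E : Type*} [Fintype E] {𝒰 : Set (Set E)} {F : Set E}

lemma mat_flat (h1 : ∅ ∈ 𝒰) (h2 : ∀ X ∈ 𝒰, ∀ Y ∈ 𝒰, X ∪ Y ∈ 𝒰)
    (h3 : ∀ X ∈ 𝒰, X.Nonempty →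
      (∀ Y₁ Y₂ : Set E, MaxBelow 𝒰 X Y₁ → MaxBelow 𝒰 X Y₂ → Y₁ ≠ Y₂ →
        (X \ Y₁) ∩ (X \ Y₂) = ∅) ∧
      (⋃ Y ∈ {Y : Set E | MaxBelow 𝒰 X Y}, X \ Y) = X) :
    (mat h1 h2 h3).IsFlat F ↔ F ∈ fam 𝒰 := by
  constructor
  · intro hF
    have h := hF.closure
    rw [mat_closure h1 h2 h3] at h
    rw [← h]
    exact acl_mem_fam h1 h2 F
  · intro hF
    have h : (mat h1 h2 h3).closure F = F := by
      rw [mat_closure h1 h2 h3, acl_of_mem hF]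
    rw [← h]
    exact closure_flat' (mat_E h1 h2 h3) F

end Con

/-- a collection `𝒰` of subsets of `E` is the collection of all (possibly
empty) unions of cocircuits of some matroid on `E` iff (1) `∅ ∈ 𝒰`; (2) `𝒰` is closed under
unions; (3) for every nonempty `X ∈ 𝒰`, the sets `X ∖ Y`, for `Y` maximal in
`{Y ∈ 𝒰 : Y ⊊ X}`, are pairwise disjoint with union `X`. -/
theorem stmt18 {E : Type*} [Fintype E] (𝒰 : Set (Set E)) :
    (∃ M : Matroid E, M.E = Set.univ ∧
      ∀ X : Set E, X ∈ 𝒰 ↔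
        ∃ 𝒞 : Set (Set E), (∀ C ∈ 𝒞, IsCocircuitOf M C) ∧ X = ⋃₀ 𝒞) ↔
    (∅ ∈ 𝒰 ∧
      (∀ X ∈ 𝒰, ∀ Y ∈ 𝒰, X ∪ Y ∈ 𝒰) ∧
      (∀ X ∈ 𝒰, X.Nonempty →
        (∀ Y₁ Y₂ : Set E, MaxBelow 𝒰 X Y₁ → MaxBelow 𝒰 X Y₂ → Y₁ ≠ Y₂ →
          (X \ Y₁) ∩ (X \ Y₂) = ∅) ∧
        (⋃ Y ∈ {Y : Set E | MaxBelow 𝒰 X Y}, X \ Y) = X)) := by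
  constructor
  · rintro ⟨M, hME, hiff⟩
    have hU : ∀ X : Set E, X ∈ 𝒰 ↔ M.IsFlat (univ \ X) :=
      fun X ↦ (hiff X).trans (sUnion_cocircuits_iff hME X)
    refine ⟨?_, ?_, ?_⟩
    · rw [hU, diff_empty, ← hME]
      exact M.ground_isFlat
    · intro X hX Y hY
      rw [hU] at hX hY ⊢
      have hpair : univ \ (X ∪ Y) = ⋂₀ {univ \ X, univ \ Y} := by
        rw [sInter_pair, diff_inter_diff]
      rw [hpair]
      refine flat_sInter_univ hME _ ?_
      rintro F hF
      rcases hF with rfl | rfl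
      · exact hX
      · exact hY
    · intro X hX hXne
      set F := univ \ X with hFdef
      have hFflat : M.IsFlat F := (hU X).mp hX
      have hXF : X = univ \ F := by rw [hFdef, diff_diff_cancel_left (subset_univ X)]
      have hU' : ∀ Z : Set E, Z ∈ 𝒰 ↔ M.IsFlat Zᶜ := by
        intro Z; rw [hU Z, compl_eq_univ_diff]
      have hFc : F = Xᶜ := by rw [hFdef, ← compl_eq_univ_diff]
      have key : ∀ Y : Set E, MaxBelow 𝒰 X Y ↔ (M.IsFlat (univ \ Y) ∧ F ⊂ univ \ Y ∧
          ∀ G, M.IsFlat G → F ⊂ G → G ⊆ univ \ Y → G = univ \ Y) := by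
        intro Y
        rw [show (univ \ Y) = Yᶜ from (compl_eq_univ_diff Y).symm, hFc]
        constructor
        · rintro ⟨hY𝒰, hYX, hYmax⟩
          refine ⟨(hU' Y).mp hY𝒰, compl_lt_compl_iff_lt.mpr hYX, fun G hG hFG hGsub ↦ ?_⟩
          have hZ𝒰 : Gᶜ ∈ 𝒰 := (hU' _).mpr (by rwa [compl_compl])
          have hZX : Gᶜ ⊂ X := by
            have h := compl_lt_compl_iff_lt.mpr hFG
            rwa [compl_compl] at h
          have hYZ : Y ⊆ Gᶜ := subset_compl_comm.mp hGsub
          have hYeq := hYmax _ hZ𝒰 hZX hYZ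
          rw [hYeq, compl_compl]
        · rintro ⟨hYflat, hss, hmin⟩
          refine ⟨(hU' Y).mpr hYflat, ?_, ?_⟩
          · have h := compl_lt_compl_iff_lt.mpr hss
            rwa [compl_compl, compl_compl] at h
          · intro Z hZ hZX hYZ
            have hGflat : M.IsFlat Zᶜ := (hU' Z).mp hZ
            have hh1 : Xᶜ ⊂ Zᶜ := compl_lt_compl_iff_lt.mpr hZX
            have hh2 : Zᶜ ⊆ Yᶜ := compl_subset_compl.mpr hYZ
            have h := hmin _ hGflat hh1 hh2
            have h' := congrArg compl h
            rw [compl_compl, compl_compl] at h'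
            exact h'.symm
      constructor
      · intro Y₁ Y₂ hY₁ hY₂ hne
        rw [eq_empty_iff_forall_notMem]
        rintro z ⟨⟨hzX, hzY₁⟩, ⟨-, hzY₂⟩⟩
        obtain ⟨hfl₁, hss₁, hmin₁⟩ := (key Y₁).mp hY₁
        obtain ⟨hfl₂, hss₂, hmin₂⟩ := (key Y₂).mp hY₂
        have hzF : z ∉ F := by rw [hFdef]; exact fun h ↦ h.2 hzX
        obtain ⟨hssC, hminC⟩ := flat_closure_insert_cov hME hFflat hzF
        set C := M.closure (insert z F) with hCdef
        have hCflat : M.IsFlat C := closure_flat' hME _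
        have hsubC : ∀ Y : Set E, M.IsFlat (univ \ Y) → F ⊂ univ \ Y → z ∉ Y →
            C ⊆ univ \ Y := by
          intro Y hfl hss hzY
          have : insert z F ⊆ univ \ Y := insert_subset ⟨mem_univ z, hzY⟩ hss.subset
          calc C ⊆ M.closure (univ \ Y) := M.closure_subset_closure this
            _ = univ \ Y := hfl.closure
        have he₁ : C = univ \ Y₁ := hmin₁ C hCflat hssC (hsubC _ hfl₁ hss₁ hzY₁)
        have he₂ : C = univ \ Y₂ := hmin₂ C hCflat hssC (hsubC _ hfl₂ hss₂ hzY₂)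
        apply hne
        have heq : univ \ Y₁ = univ \ Y₂ := he₁ ▸ he₂
        rw [← compl_eq_univ_diff, ← compl_eq_univ_diff] at heq
        exact compl_inj_iff.mp heq
      · apply subset_antisymm
        · exact iUnion₂_subset fun Y _ ↦ diff_subset
        · intro z hzX
          have hzF : z ∉ F := by rw [hFdef]; exact fun h ↦ h.2 hzX
          obtain ⟨hssC, hminC⟩ := flat_closure_insert_cov hME hFflat hzF
          set C := M.closure (insert z F) with hCdef
          have hCflat : M.IsFlat C := closure_flat' hME _
          have hCuniv : univ \ (univ \ C) = C := diff_diff_cancel_left (subset_univ C)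
          have hY : MaxBelow 𝒰 X (univ \ C) := by
            rw [key]
            refine ⟨by rwa [hCuniv], by rwa [hCuniv], ?_⟩
            rw [hCuniv]
            exact hminC
          have hzC : z ∈ C := M.subset_closure _ (hME ▸ subset_univ _) (mem_insert z F)
          simp only [mem_iUnion, mem_setOf_eq, exists_prop]
          exact ⟨univ \ C, hY, hzX, fun h ↦ h.2 hzC⟩
  · rintro ⟨h1, h2, h3⟩
    refine ⟨Con.mat h1 h2 h3, Con.mat_E h1 h2 h3, fun X ↦ ?_⟩
    rw [sUnion_cocircuits_iff (Con.mat_E h1 h2 h3) X, Con.mat_flat h1 h2 h3]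
    simp [Con.fam, ← compl_eq_univ_diff]
end
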